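/- arXiv:2408.14263 — 6 statements merged into one kernel-verified Lean document; each statement's English description precedes it below -/
import Mathlib

section
/- Let A be a finite set with |A| ≥ 3 and let m be a natural number. Every map f : L_A^m → L_A that satisfies IIA and PAR is the projection onto some coordinate: there exists i₀ with 1 ≤ i₀ ≤ m such that f(p₁,…,p_m) = p_{i₀} for all (p₁,…,p_m) ∈ L_A^m. -/
def LinPref (A : Type*) : Type _ := {r : A → A → Prop // IsLinearOrder A r}

def restrictPref {A : Type*} (s : Set A) (r : LinPref A) : LinPref s :=
  ⟨fun x y => r.1 x.1 y.1, by
    haveI := r.2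
    exact
      { refl := fun x => refl_of r.1 x.1
        trans := fun x y z hxy hyz => trans_of r.1 hxy hyz
        antisymm := fun x y hxy hyx => Subtype.ext (antisymm_of r.1 hxy hyx)
        total := fun x y => total_of r.1 x.1 y.1 }⟩

namespace ArrowAux

variable {A : Type*}

lemma lin_refl (r : LinPref A) (a : A) : r.1 a a := by haveI := r.2; exact refl_of r.1 a
lemma lin_trans (r : LinPref A) {a b c : A} (h1 : r.1 a b) (h2 : r.1 b c) : r.1 a c := by
  haveI := r.2; exact trans_of r.1 h1 h2
lemma lin_antisymm (r : LinPref A) {a b : A} (h1 : r.1 a b) (h2 : r.1 b a) : a = b := by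
  haveI := r.2; exact antisymm_of r.1 h1 h2
lemma lin_total (r : LinPref A) (a b : A) : r.1 a b ∨ r.1 b a := by
  haveI := r.2; exact total_of r.1 a b
lemma lin_not (r : LinPref A) {a b : A} (h : a ≠ b) : ¬ r.1 a b ↔ r.1 b a :=
  ⟨fun hn => (lin_total r a b).resolve_left hn,
   fun hba hab => h (lin_antisymm r hab hba)⟩

def mkLin (g : A → ℕ) (hg : Function.Injective g) : LinPref A :=
  ⟨fun x y => g x ≤ g y,
    { refl := fun _ => le_refl _
      trans := fun _ _ _ h1 h2 => le_trans h1 h2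
      antisymm := fun _ _ h1 h2 => hg (le_antisymm h1 h2)
      total := fun _ _ => le_total _ _ }⟩

variable [Fintype A] [DecidableEq A]

noncomputable def mk3 (a b c : A) : LinPref A :=
  mkLin (fun x => if x = a then 0 else if x = b then 1 else if x = c then 2
      else ((Fintype.equivFin A) x : ℕ) + 3) (by
    intro x y h
    by_cases hxa : x = a <;> by_cases hya : y = a <;>
      by_cases hxb : x = b <;> by_cases hyb : y = b <;>
      by_cases hxc : x = c <;> by_cases hyc : y = c <;>
      simp_all
    have : (Fintype.equivFin A) x = (Fintype.equivFin A) y := Fin.ext (by omega)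
    exact (Fintype.equivFin A).injective this)

variable {a b c : A}

lemma mk3_ab (hab : a ≠ b) : (mk3 a b c).1 a b := by
  have h' : ¬ b = a := fun h => hab h.symm
  simp [mk3, mkLin, h']

lemma mk3_bc (hab : a ≠ b) (hbc : b ≠ c) (hac : a ≠ c) : (mk3 a b c).1 b c := by
  have h1 : ¬ b = a := fun h => hab h.symm
  have h2 : ¬ c = a := fun h => hac h.symm
  have h3 : ¬ c = b := fun h => hbc h.symm
  simp [mk3, mkLin, h1, h2, h3]

lemma mk3_ac (hab : a ≠ b) (hbc : b ≠ c) (hac : a ≠ c) : (mk3 a b c).1 a c :=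
  lin_trans _ (mk3_ab hab) (mk3_bc hab hbc hac)

lemma mk3_not_ba (hab : a ≠ b) : ¬ (mk3 a b c).1 b a :=
  fun h => hab (lin_antisymm _ (mk3_ab (c := c) hab) h)

lemma mk3_not_cb (hab : a ≠ b) (hbc : b ≠ c) (hac : a ≠ c) : ¬ (mk3 a b c).1 c b :=
  fun h => hbc (lin_antisymm _ (mk3_bc hab hbc hac) h)

lemma mk3_not_ca (hab : a ≠ b) (hbc : b ≠ c) (hac : a ≠ c) : ¬ (mk3 a b c).1 c a :=
  fun h => hac (lin_antisymm _ (mk3_ac hab hbc hac) h)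

/-- restrictions to a pair agree iff the verdicts on the pair agree -/
lemma restrict_pair_eq {a b : A} (hab : a ≠ b) {r r' : LinPref A}
    (h : r.1 a b ↔ r'.1 a b) :
    restrictPref {a, b} r = restrictPref {a, b} r' := by
  apply Subtype.ext
  funext x y
  apply propext
  obtain ⟨x, hx⟩ := x
  obtain ⟨y, hy⟩ := y
  simp only [Set.mem_insert_iff, Set.mem_singleton_iff] at hx hy
  show r.1 x y ↔ r'.1 x y
  rcases hx with rfl | rfl <;> rcases hy with rfl | rfl
  · exact iff_of_true (lin_refl r _) (lin_refl r' _)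
  · exact h
  · rw [← lin_not r hab, ← lin_not r' hab]; exact not_congr h
  · exact iff_of_true (lin_refl r _) (lin_refl r' _)

section Main

variable {m : ℕ} {f : (Fin m → LinPref A) → LinPref A}

def IIA (f : (Fin m → LinPref A) → LinPref A) : Prop :=
  ∀ a b : A, a ≠ b →
      ∃ φ : (Fin m → LinPref (({a, b} : Set A))) → LinPref (({a, b} : Set A)),
        ∀ p : Fin m → LinPref A,
          φ (fun i => restrictPref {a, b} (p i)) = restrictPref {a, b} (f p)

lemma iia_pair (hIIA : IIA f) {a b : A} (hab : a ≠ b) {P Q : Fin m → LinPref A}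
    (h : ∀ i, (P i).1 a b ↔ (Q i).1 a b) : (f P).1 a b ↔ (f Q).1 a b := by
  obtain ⟨φ, hφ⟩ := hIIA a b hab
  have e1 := hφ P
  have e2 := hφ Q
  have hres : (fun i => restrictPref {a, b} (P i)) = fun i => restrictPref {a, b} (Q i) :=
    funext fun i => restrict_pair_eq hab (h i)
  have hfe : restrictPref ({a, b} : Set A) (f P) = restrictPref {a, b} (f Q) := by
    rw [← e1, ← e2, hres]
  have ha : a ∈ ({a, b} : Set A) := Or.inl rfl
  have hb : b ∈ ({a, b} : Set A) := Or.inr rfl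
  have := congrFun (congrFun (congrArg Subtype.val hfe) ⟨a, ha⟩) ⟨b, hb⟩
  exact iff_of_eq this

variable (hA : 3 ≤ Fintype.card A)

include hA in
lemma exists_third (a b : A) : ∃ c : A, c ≠ a ∧ c ≠ b := by
  by_contra h
  push_neg at h
  have hsub : (Finset.univ : Finset A) ⊆ {a, b} := by
    intro x _
    rcases Classical.em (x = a) with rfl | hx
    · simp
    · simp [h x hx]
  have := Finset.card_le_card hsub
  have h2 : ({a, b} : Finset A).card ≤ 2 :=
    le_trans (Finset.card_insert_le _ _) (by simp)
  simp only [Finset.card_univ] at this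
  omega

variable (hPAR : ∀ p : LinPref A, f (fun _ => p) = p)

include hA hPAR in
lemma unanimity (hIIA : IIA f) {a b : A} (hab : a ≠ b) {P : Fin m → LinPref A}
    (h : ∀ i, (P i).1 a b) : (f P).1 a b := by
  obtain ⟨c, hca, hcb⟩ := exists_third hA a b
  set q : LinPref A := mk3 a b c with hq
  have hqab : q.1 a b := mk3_ab hab
  have : (f P).1 a b ↔ (f (fun _ => q)).1 a b :=
    iia_pair hIIA hab (fun i => iff_of_true (h i) hqab)
  rw [this, hPAR q]
  exact hqab

def Dec (f : (Fin m → LinPref A) → LinPref A) (U : Finset (Fin m)) (a b : A) : Prop :=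
  ∀ P : Fin m → LinPref A, (∀ i, (P i).1 a b ↔ i ∈ U) → (f P).1 a b

lemma dec_of_exists (hIIA : IIA f) {a b : A} (hab : a ≠ b) {U : Finset (Fin m)}
    {Q : Fin m → LinPref A} (hpat : ∀ i, (Q i).1 a b ↔ i ∈ U) (hres : (f Q).1 a b) :
    Dec f U a b :=
  fun P hP => (iia_pair hIIA hab (fun i => (hP i).trans (hpat i).symm)).mpr hres


include hA hPAR in
lemma dec_L1 (hIIA : IIA f) {U : Finset (Fin m)} {a b c : A}
    (hab : a ≠ b) (hbc : b ≠ c) (hac : a ≠ c)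
    (h : Dec f U a b) : Dec f U a c := by
  classical
  set Q : Fin m → LinPref A := fun i => if i ∈ U then mk3 a b c else mk3 b c a with hQ
  have hpat_ab : ∀ i, (Q i).1 a b ↔ i ∈ U := by
    intro i
    by_cases hi : i ∈ U <;> simp only [hQ, hi, if_pos, if_neg, not_false_iff]
    · simpa [hi] using mk3_ab (c := c) hab
    · simp only [hi, iff_false]
      exact fun hcon => hab (lin_antisymm _ hcon (mk3_ac hbc (Ne.symm hac) (Ne.symm hab)))
  have hfab : (f Q).1 a b := h Q hpat_ab
  have hfbc : (f Q).1 b c := by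
    refine unanimity hA hPAR hIIA hbc (fun i => ?_)
    by_cases hi : i ∈ U <;> simp only [hQ, hi, if_pos, if_neg, not_false_iff]
    · exact mk3_bc hab hbc hac
    · exact mk3_ab hbc
  have hfac : (f Q).1 a c := lin_trans _ hfab hfbc
  refine dec_of_exists hIIA hac (U := U) (Q := Q) (fun i => ?_) hfac
  by_cases hi : i ∈ U <;> simp only [hQ, hi, if_pos, if_neg, not_false_iff]
  · simpa [hi] using mk3_ac hab hbc hac
  · simp only [hi, iff_false]
    exact fun hcon => hac (lin_antisymm _ hcon (mk3_bc hbc (Ne.symm hac) (Ne.symm hab)))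

include hA hPAR in
lemma dec_L2 (hIIA : IIA f) {U : Finset (Fin m)} {a b c : A}
    (hab : a ≠ b) (hbc : b ≠ c) (hac : a ≠ c)
    (h : Dec f U a b) : Dec f U c b := by
  classical
  set Q : Fin m → LinPref A := fun i => if i ∈ U then mk3 c a b else mk3 b c a with hQ
  have hpat_ab : ∀ i, (Q i).1 a b ↔ i ∈ U := by
    intro i
    by_cases hi : i ∈ U <;> simp only [hQ, hi, if_pos, if_neg, not_false_iff]
    · simpa [hi] using mk3_bc (Ne.symm hac) hab (Ne.symm hbc)
    · simp only [hi, iff_false]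
      exact fun hcon => hab (lin_antisymm _ hcon (mk3_ac hbc (Ne.symm hac) (Ne.symm hab)))
  have hfab : (f Q).1 a b := h Q hpat_ab
  have hfca : (f Q).1 c a := by
    refine unanimity hA hPAR hIIA (Ne.symm hac) (fun i => ?_)
    by_cases hi : i ∈ U <;> simp only [hQ, hi, if_pos, if_neg, not_false_iff]
    · exact mk3_ab (Ne.symm hac)
    · exact mk3_bc hbc (Ne.symm hac) (Ne.symm hab)
  have hfcb : (f Q).1 c b := lin_trans _ hfca hfab
  refine dec_of_exists hIIA (Ne.symm hbc) (U := U) (Q := Q) (fun i => ?_) hfcb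
  by_cases hi : i ∈ U <;> simp only [hQ, hi, if_pos, if_neg, not_false_iff]
  · simpa [hi] using mk3_ac (Ne.symm hac) hab (Ne.symm hbc)
  · simp only [hi, iff_false]
    exact fun hcon => hbc (lin_antisymm _ (mk3_ab (c := a) hbc) hcon)

def DecAll (f : (Fin m → LinPref A) → LinPref A) (U : Finset (Fin m)) : Prop :=
  ∀ a b : A, a ≠ b → Dec f U a b

include hA hPAR in
lemma dec_spread (hIIA : IIA f) {U : Finset (Fin m)} {a b : A} (hab : a ≠ b)
    (h : Dec f U a b) : DecAll f U := by
  intro x y hxy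
  have L1 := fun {a b c : A} (h1 : a ≠ b) (h2 : b ≠ c) (h3 : a ≠ c) hd =>
    dec_L1 hA hPAR hIIA (U := U) h1 h2 h3 hd
  have L2 := fun {a b c : A} (h1 : a ≠ b) (h2 : b ≠ c) (h3 : a ≠ c) hd =>
    dec_L2 hA hPAR hIIA (U := U) h1 h2 h3 hd
  by_cases hxa : x = a
  · subst hxa
    by_cases hyb : y = b
    · subst hyb; exact h
    · exact L1 hab (fun he => hyb he.symm) hxy h
  · by_cases hyb : y = b
    · subst hyb
      exact L2 hab (Ne.symm hxy) (fun he => hxa he.symm) h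
    · by_cases hxb : x = b
      · subst hxb
        by_cases hya : y = a
        · subst hya
          obtain ⟨c, hca, hcb⟩ := exists_third hA y x
          have h1 : Dec f U y c := L1 hab (fun he => hcb he.symm) (fun he => hca he.symm) h
          have h2 : Dec f U x c := L2 (fun he => hca he.symm) hcb hab h1
          exact L1 (fun he => hcb he.symm) hca hxy h2
        · have h1 : Dec f U a y := L1 hab (fun he => hyb he.symm) (fun he => hya he.symm) h
          exact L2 (fun he => hya he.symm) hyb hab h1
      · by_cases hya : y = a
        · subst hya
          have h1 : Dec f U x b := L2 hab (fun he => hxb he.symm) (fun he => hxa he.symm) h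
          exact L1 hxb (Ne.symm hab) hxy h1
        · have h1 : Dec f U a y := L1 hab (fun he => hyb he.symm) (fun he => hya he.symm) h
          exact L2 (fun he => hya he.symm) (Ne.symm hxy) (fun he => hxa he.symm) h1

include hA hPAR in
lemma not_dec_empty (hIIA : IIA f) {a b : A} (hab : a ≠ b) : ¬ Dec f (∅ : Finset (Fin m)) a b := by
  classical
  intro h
  obtain ⟨c, hca, hcb⟩ := exists_third hA a b
  set Q : Fin m → LinPref A := fun _ => mk3 b a c with hQ
  have hpat : ∀ i, (Q i).1 a b ↔ i ∈ (∅ : Finset (Fin m)) := by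
    intro i
    simp only [Finset.notMem_empty, iff_false, hQ]
    exact fun hcon => hab (lin_antisymm _ hcon (mk3_ab (Ne.symm hab)))
  have h1 : (f Q).1 a b := h Q hpat
  have h2 : (f Q).1 b a :=
    unanimity hA hPAR hIIA (Ne.symm hab) (fun i => mk3_ab (c := c) (Ne.symm hab))
  exact hab (lin_antisymm _ h1 h2)

include hA hPAR in
lemma decAll_univ (hIIA : IIA f) : DecAll f (Finset.univ : Finset (Fin m)) :=
  fun a b hab P hpat =>
    unanimity hA hPAR hIIA hab (fun i => (hpat i).mpr (Finset.mem_univ i))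

include hA hPAR in
lemma decAll_shrink (hIIA : IIA f) {U : Finset (Fin m)} {j : Fin m}
    (hdec : DecAll f U) (hj : j ∈ U) :
    DecAll f (U.erase j) ∨ DecAll f ({j} : Finset (Fin m)) := by
  classical
  obtain ⟨a, b, hab⟩ := Fintype.exists_pair_of_one_lt_card (show 1 < Fintype.card A by omega)
  obtain ⟨c, hca, hcb⟩ := exists_third hA a b
  set Q : Fin m → LinPref A := fun i =>
    if i = j then mk3 a b c else if i ∈ U then mk3 c a b else mk3 b c a with hQ
  have hfab : (f Q).1 a b := by
    refine hdec a b hab Q (fun i => ?_)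
    by_cases hij : i = j
    · subst hij
      simp only [hQ, if_pos rfl, hj, iff_true]
      exact mk3_ab hab
    · by_cases hi : i ∈ U <;>
        simp only [hQ, if_neg hij, hi, if_pos, if_neg, not_false_iff]
      · simp only [hi, iff_true]
        exact mk3_bc hca hab hcb
      · simp only [hi, iff_false]
        exact fun hcon => hab
          (lin_antisymm _ hcon (mk3_ac (Ne.symm hcb) hca (Ne.symm hab)))
  by_cases hfcb : (f Q).1 c b
  · left
    refine dec_spread hA hPAR hIIA hcb (dec_of_exists hIIA hcb
      (U := U.erase j) (Q := Q) (fun i => ?_) hfcb)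
    by_cases hij : i = j
    · subst hij
      rw [Finset.mem_erase]
      simp only [hQ, if_pos rfl, ne_eq, not_true_eq_false, false_and, iff_false]
      exact fun hcon => hcb (lin_antisymm _ hcon (mk3_bc hab (Ne.symm hcb) (Ne.symm hca)))
    · by_cases hi : i ∈ U
      · rw [Finset.mem_erase]
        simp only [hQ, if_neg hij, if_pos hi, hij, hi, ne_eq, not_false_iff, true_and,
          and_true, iff_true]
        exact mk3_ac hca hab hcb
      · rw [Finset.mem_erase]
        simp only [hQ, if_neg hij, if_neg hi, hi, and_false, iff_false]
        exact fun hcon => hcb (lin_antisymm _ hcon (mk3_ab (c := a) (Ne.symm hcb)))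
  · right
    have hfbc : (f Q).1 b c := ((lin_not _ hcb).mp hfcb)
    have hfac : (f Q).1 a c := lin_trans _ hfab hfbc
    refine dec_spread hA hPAR hIIA (Ne.symm hca) (dec_of_exists hIIA (Ne.symm hca)
      (U := ({j} : Finset (Fin m))) (Q := Q) (fun i => ?_) hfac)
    by_cases hij : i = j
    · subst hij
      simp only [hQ, if_pos rfl, Finset.mem_singleton, iff_true]
      exact mk3_ac hab (Ne.symm hcb) (Ne.symm hca)
    · simp only [Finset.mem_singleton, hij, iff_false]
      by_cases hi : i ∈ U <;>
        simp only [hQ, if_neg hij, hi, if_pos, if_neg, not_false_iff]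
      · exact fun hcon => hca (lin_antisymm _ (mk3_ab hca) hcon)
      · exact fun hcon => hca
          (lin_antisymm _ (mk3_bc (Ne.symm hcb) hca (Ne.symm hab)) hcon)

include hA hPAR in
lemma exists_dictator_set (hIIA : IIA f) : ∃ j : Fin m, DecAll f ({j} : Finset (Fin m)) := by
  classical
  obtain ⟨a, b, hab⟩ := Fintype.exists_pair_of_one_lt_card (show 1 < Fintype.card A by omega)
  have main : ∀ n (U : Finset (Fin m)), U.card ≤ n → DecAll f U →
      ∃ j : Fin m, DecAll f ({j} : Finset (Fin m)) := by
    intro n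
    induction n with
    | zero =>
      intro U hU hdec
      have : U = ∅ := Finset.card_eq_zero.mp (Nat.le_zero.mp hU)
      subst this
      exact absurd (hdec a b hab) (not_dec_empty hA hPAR hIIA hab)
    | succ n ih =>
      intro U hU hdec
      rcases Finset.eq_empty_or_nonempty U with rfl | ⟨j, hj⟩
      · exact absurd (hdec a b hab) (not_dec_empty hA hPAR hIIA hab)
      · rcases decAll_shrink hA hPAR hIIA hdec hj with h | h
        · refine ih (U.erase j) ?_ h
          have := Finset.card_erase_of_mem hj
          have := Finset.card_pos.mpr ⟨j, hj⟩
          omega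
        · exact ⟨j, h⟩
  exact main (Finset.univ.card) Finset.univ le_rfl (decAll_univ hA hPAR hIIA)

include hA hPAR in
lemma dictator_pair (hIIA : IIA f) {j : Fin m} (hdec : DecAll f ({j} : Finset (Fin m)))
    {P : Fin m → LinPref A} {a b : A} (hab : a ≠ b) (hP : (P j).1 a b) : (f P).1 a b := by
  classical
  obtain ⟨c, hca, hcb⟩ := exists_third hA a b
  set Q : Fin m → LinPref A := fun i =>
    if i = j then mk3 a c b else if (P i).1 a b then mk3 c a b else mk3 c b a with hQ
  have hfac : (f Q).1 a c := by
    refine hdec a c (Ne.symm hca) Q (fun i => ?_)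
    by_cases hij : i = j
    · subst hij
      simp only [hQ, if_pos rfl, Finset.mem_singleton, iff_true]
      exact mk3_ab (Ne.symm hca)
    · simp only [Finset.mem_singleton, hij, iff_false, hQ, if_neg hij]
      by_cases hi : (P i).1 a b <;> simp only [hi, if_pos, if_neg, not_false_iff]
      · exact fun hcon => hca (lin_antisymm _ (mk3_ab hca) hcon)
      · exact fun hcon => hca
          (lin_antisymm _ (mk3_ac hcb (Ne.symm hab) hca) hcon)
  have hfcb : (f Q).1 c b := by
    refine unanimity hA hPAR hIIA hcb (fun i => ?_)
    by_cases hij : i = j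
    · subst hij
      simp only [hQ, if_pos rfl]
      exact mk3_bc (Ne.symm hca) hcb hab
    · simp only [hQ, if_neg hij]
      by_cases hi : (P i).1 a b <;> simp only [hi, if_pos, if_neg, not_false_iff]
      · exact mk3_ac hca hab hcb
      · exact mk3_ab hcb
  have hfab : (f Q).1 a b := lin_trans _ hfac hfcb
  refine (iia_pair hIIA hab (Q := Q) (fun i => ?_)).mpr hfab
  by_cases hij : i = j
  · subst hij
    simp only [hQ, if_pos rfl]
    exact iff_of_true hP (mk3_ac (Ne.symm hca) hcb hab)
  · simp only [hQ, if_neg hij]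
    by_cases hi : (P i).1 a b
    · rw [if_pos hi]
      exact iff_of_true hi (mk3_bc hca hab hcb)
    · rw [if_neg hi]
      exact iff_of_false hi
        (fun hcon => hab (lin_antisymm _ hcon (mk3_bc hcb (Ne.symm hab) hca)))

end Main

end ArrowAux

/-- **Arrow's impossibility theorem.**  If `|A| ≥ 3`, every map
`f : L_A^m → L_A` satisfying IIA and PAR is the projection onto some
coordinate. -/
theorem arrow_impossibility
    {A : Type*} [Fintype A] (hA : 3 ≤ Fintype.card A) (m : ℕ)
    (f : (Fin m → LinPref A) → LinPref A)
    (hIIA : ∀ a b : A, a ≠ b →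
      ∃ φ : (Fin m → LinPref (({a, b} : Set A))) → LinPref (({a, b} : Set A)),
        ∀ p : Fin m → LinPref A,
          φ (fun i => restrictPref {a, b} (p i)) = restrictPref {a, b} (f p))
    (hPAR : ∀ p : LinPref A, f (fun _ => p) = p) :
    ∃ i₀ : Fin m, ∀ p : Fin m → LinPref A, f p = p i₀ := by
  classical
  obtain ⟨j, hj⟩ := ArrowAux.exists_dictator_set hA hPAR hIIA
  refine ⟨j, fun P => ?_⟩
  apply Subtype.ext
  funext a b
  apply propext
  constructor
  · intro h
    by_cases hab : a = b
    · subst hab; exact ArrowAux.lin_refl _ a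
    · by_contra hn
      have hba : (P j).1 b a := (ArrowAux.lin_total (P j) a b).resolve_left hn
      have := ArrowAux.dictator_pair hA hPAR hIIA hj (Ne.symm hab) hba
      exact hab (ArrowAux.lin_antisymm _ h this)
  · intro h
    by_cases hab : a = b
    · subst hab; exact ArrowAux.lin_refl _ a
    · exact ArrowAux.dictator_pair hA hPAR hIIA hj hab h
end

section
/- Let 𝒜 be a central hyperplane arrangement in a finite-dimensional real vector space V. Then, up to order, there is a unique decomposition 𝒜 = 𝒜₁ ⊎ 𝒜₂ ⊎ ⋯ ⊎ 𝒜ₙ (i.e. 𝒜 is the disjoint union of the 𝒜ᵢ and r(𝒜) = r(𝒜₁) + ⋯ + r(𝒜ₙ)) in which every 𝒜ᵢ is indecomposable; moreover this decomposition coincides with the partition of 𝒜 into the connected components of the graph Γ(𝒜). -/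
open Set

section Arrangement

variable {V : Type*} [NormedAddCommGroup V] [NormedSpace ℝ V]

/-- A (linear) hyperplane: the kernel of a nonzero linear functional. -/
def IsHyperplane (H : Submodule ℝ V) : Prop :=
  ∃ f : V →ₗ[ℝ] ℝ, f ≠ 0 ∧ LinearMap.ker f = H

/-- A central hyperplane arrangement: a finite set of linear hyperplanes. -/
def IsCentralArrangement (𝒜 : Finset (Submodule ℝ V)) : Prop :=
  ∀ H ∈ 𝒜, IsHyperplane H

/-- The complement of the union of the hyperplanes of `𝒜`. -/
def arrComplement (𝒜 : Finset (Submodule ℝ V)) : Set V :=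
  {x | ∀ H ∈ 𝒜, x ∉ H}

/-- The set of chambers of `𝒜`: connected components of the complement. -/
def Chambers (𝒜 : Finset (Submodule ℝ V)) : Set (Set V) :=
  {c | ∃ x ∈ arrComplement 𝒜, c = connectedComponentIn (arrComplement 𝒜) x}

/-- A chamber of `𝒜`. -/
abbrev Chamber (𝒜 : Finset (Submodule ℝ V)) := ↥(Chambers 𝒜)

/-- A chosen point of a chamber. -/
noncomputable def Chamber.pt {𝒜 : Finset (Submodule ℝ V)} (c : Chamber 𝒜) : V :=
  c.2.choose

lemma Chamber.pt_mem {𝒜 : Finset (Submodule ℝ V)} (c : Chamber 𝒜) :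
    c.pt ∈ arrComplement 𝒜 := c.2.choose_spec.1

/-- `ε_H` : the chamber of the one-hyperplane arrangement `{H}` containing a
given chamber of `𝒜` (for `H ∈ 𝒜`). -/
noncomputable def epsC {𝒜 : Finset (Submodule ℝ V)} (H : Submodule ℝ V) (hH : H ∈ 𝒜)
    (c : Chamber 𝒜) : Chamber ({H} : Finset (Submodule ℝ V)) :=
  ⟨connectedComponentIn (arrComplement ({H} : Finset (Submodule ℝ V))) c.pt, by
    refine ⟨c.pt, ?_, rfl⟩
    intro H' hH'
    rw [Finset.mem_singleton] at hH'
    subst hH'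
    exact c.pt_mem _ hH⟩

/-- IIA for a map `Ch(𝒜)^m → Ch(𝒜)^l`. -/
def SatisfiesIIA {𝒜 : Finset (Submodule ℝ V)} {m l : ℕ}
    (Φ : (Fin m → Chamber 𝒜) → (Fin l → Chamber 𝒜)) : Prop :=
  ∀ (H : Submodule ℝ V) (hH : H ∈ 𝒜),
    ∃ φ : (Fin m → Chamber ({H} : Finset (Submodule ℝ V))) →
          (Fin l → Chamber ({H} : Finset (Submodule ℝ V))),
      ∀ c : Fin m → Chamber 𝒜,
        φ (fun i => epsC H hH (c i)) = fun j => epsC H hH (Φ c j)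

/-- IIA for a map `Ch(𝒜)^m → Ch(𝒜)`. -/
def SatisfiesIIA1 {𝒜 : Finset (Submodule ℝ V)} {m : ℕ}
    (Φ : (Fin m → Chamber 𝒜) → Chamber 𝒜) : Prop :=
  ∀ (H : Submodule ℝ V) (hH : H ∈ 𝒜),
    ∃ φ : (Fin m → Chamber ({H} : Finset (Submodule ℝ V))) →
          Chamber ({H} : Finset (Submodule ℝ V)),
      ∀ c : Fin m → Chamber 𝒜,
        φ (fun i => epsC H hH (c i)) = epsC H hH (Φ c)

/-- IIA for a map `Ch(𝒜) → Ch(𝒜)`. -/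
def SatisfiesIIAone {𝒜 : Finset (Submodule ℝ V)}
    (f : Chamber 𝒜 → Chamber 𝒜) : Prop :=
  ∀ (H : Submodule ℝ V) (hH : H ∈ 𝒜),
    ∃ φ : Chamber ({H} : Finset (Submodule ℝ V)) → Chamber ({H} : Finset (Submodule ℝ V)),
      ∀ c : Chamber 𝒜, φ (epsC H hH c) = epsC H hH (f c)

/-- Pareto property. -/
def SatisfiesPAR {𝒜 : Finset (Submodule ℝ V)} {m : ℕ}
    (Φ : (Fin m → Chamber 𝒜) → Chamber 𝒜) : Prop :=
  ∀ c : Chamber 𝒜, Φ (fun _ => c) = c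

/-- Admissible map: IIA and PAR. -/
def Admissible {𝒜 : Finset (Submodule ℝ V)} {m : ℕ}
    (Φ : (Fin m → Chamber 𝒜) → Chamber 𝒜) : Prop :=
  SatisfiesIIA1 Φ ∧ SatisfiesPAR Φ

/-- The rank `r(𝒜) = dim V − dim ⋂_{H ∈ 𝒜} H`. -/
noncomputable def arrRank (𝒜 : Finset (Submodule ℝ V)) : ℕ :=
  Module.finrank ℝ V - Module.finrank ℝ ↥(𝒜.inf id)

/-- Decomposability of a central arrangement. -/
def Decomposable (𝒜 : Finset (Submodule ℝ V)) : Prop :=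
  ∃ (n : ℕ) (parts : Fin n → Finset (Submodule ℝ V)),
    2 ≤ n ∧
    (∀ i, (parts i).Nonempty) ∧
    (∀ i j H, H ∈ parts i → H ∈ parts j → i = j) ∧
    (∀ H, H ∈ 𝒜 ↔ ∃ i, H ∈ parts i) ∧
    arrRank 𝒜 = ∑ i, arrRank (parts i)

/-- A dependent subarrangement: `r(ℬ) < |ℬ|`. -/
def Dependent (ℬ : Finset (Submodule ℝ V)) : Prop := arrRank ℬ < ℬ.card

/-- A circuit: a minimal dependent subarrangement. -/
def IsCircuit (ℬ : Finset (Submodule ℝ V)) : Prop :=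
  Dependent ℬ ∧ ∀ ℬ' ⊆ ℬ, Dependent ℬ' → ℬ' = ℬ

/-- The graph `Γ(𝒜)`: vertices are the hyperplanes of `𝒜`, with an edge between two
distinct hyperplanes iff some circuit of `𝒜` contains both. -/
def circuitGraph (𝒜 : Finset (Submodule ℝ V)) : SimpleGraph {H // H ∈ 𝒜} where
  Adj H H' := H ≠ H' ∧ ∃ ℬ ⊆ 𝒜, IsCircuit ℬ ∧ H.1 ∈ ℬ ∧ H'.1 ∈ ℬ
  symm := by
    constructor
    rintro a b ⟨hne, ℬ, hsub, hcirc, ha, hb⟩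
    exact ⟨hne.symm, ℬ, hsub, hcirc, hb, ha⟩
  loopless := by
    constructor
    rintro a ⟨h, -⟩
    exact h rfl

/-- `H` separates a set `T ⊆ Ch(𝒜)^m` if the image of `T` under `(ε_H)^m` has at
least two elements. -/
def SeparationOf {𝒜 : Finset (Submodule ℝ V)} {m : ℕ} (H : Submodule ℝ V) (hH : H ∈ 𝒜)
    (T : Set (Fin m → Chamber 𝒜)) : Prop :=
  ∃ t₁ ∈ T, ∃ t₂ ∈ T,
    (fun i => epsC H hH (t₁ i)) ≠ (fun i => epsC H hH (t₂ i))

end Arrangement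

/-- A decomposition of `𝒜` into pairwise disjoint nonempty indecomposable
subarrangements with additive rank. -/
def IsIndecomposableDecomposition
    {V : Type*} [NormedAddCommGroup V] [NormedSpace ℝ V]
    (𝒜 : Finset (Submodule ℝ V)) (n : ℕ)
    (parts : Fin n → Finset (Submodule ℝ V)) : Prop :=
  (∀ i, (parts i).Nonempty) ∧
  (∀ i j H, H ∈ parts i → H ∈ parts j → i = j) ∧
  (∀ H, H ∈ 𝒜 ↔ ∃ i, H ∈ parts i) ∧
  arrRank 𝒜 = ∑ i, arrRank (parts i) ∧
  (∀ i, ¬ Decomposable (parts i))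

namespace ArrDecomp
open Module Submodule

variable {V : Type*} [NormedAddCommGroup V] [NormedSpace ℝ V]

open Classical in
noncomputable def fH (H : Submodule ℝ V) : Module.Dual ℝ V :=
  if h : IsHyperplane H then h.choose else 0

lemma fH_ne {H : Submodule ℝ V} (h : IsHyperplane H) : fH H ≠ 0 := by
  rw [fH]; rw [dif_pos h]; exact h.choose_spec.1

lemma fH_ker {H : Submodule ℝ V} (h : IsHyperplane H) : LinearMap.ker (fH H) = H := by
  rw [fH]; rw [dif_pos h]; exact h.choose_spec.2

lemma fH_injOn {H H' : Submodule ℝ V} (h : IsHyperplane H) (h' : IsHyperplane H')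
    (he : fH H = fH H') : H = H' := by
  rw [← fH_ker h, ← fH_ker h', he]

/-- span of the defining functionals -/
noncomputable def sp (ℬ : Finset (Submodule ℝ V)) : Submodule ℝ (Module.Dual ℝ V) :=
  span ℝ (fH '' ↑ℬ)

lemma inf_eq_coann (ℬ : Finset (Submodule ℝ V)) (hb : ∀ H ∈ ℬ, IsHyperplane H) :
    ℬ.inf id = (sp ℬ).dualCoannihilator := by
  ext x
  rw [Submodule.mem_finsetInf]
  constructor
  · intro hx
    rw [sp, Submodule.mem_dualCoannihilator]
    intro φ hφ
    refine Submodule.span_induction ?_ ?_ ?_ ?_ hφ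
    · rintro f ⟨H, hH, rfl⟩
      have : x ∈ LinearMap.ker (fH H) := by rw [fH_ker (hb H hH)]; exact hx H hH
      exact this
    · simp
    · intro f g _ _ hf hg; simp [LinearMap.add_apply, hf, hg]
    · intro a f _ hf; simp [hf]
  · intro hx H hH
    rw [Submodule.mem_dualCoannihilator] at hx
    have : fH H x = 0 := hx _ (Submodule.subset_span ⟨H, hH, rfl⟩)
    rw [← fH_ker (hb H hH)]; exact this

variable [FiniteDimensional ℝ V]

lemma arrRank_eq_finrank_sp (ℬ : Finset (Submodule ℝ V)) (hb : ∀ H ∈ ℬ, IsHyperplane H) :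
    arrRank ℬ = finrank ℝ (sp ℬ) := by
  have h1 := Subspace.finrank_add_finrank_dualCoannihilator_eq (sp ℬ)
  rw [arrRank, inf_eq_coann ℬ hb]
  omega

end ArrDecomp

namespace ArrDecomp
open Module Submodule
open scoped Classical

variable {V : Type*} [NormedAddCommGroup V] [NormedSpace ℝ V]

lemma sp_image (ℬ : Finset (Submodule ℝ V)) : sp ℬ = span ℝ ↑(ℬ.image fH) := by
  rw [sp, Finset.coe_image]

lemma sp_union (A B : Finset (Submodule ℝ V)) : sp (A ∪ B) = sp A ⊔ sp B := by
  rw [sp, sp, sp, Finset.coe_union, Set.image_union, Submodule.span_union]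

lemma sp_mono {A B : Finset (Submodule ℝ V)} (h : A ⊆ B) : sp A ≤ sp B :=
  Submodule.span_mono (Set.image_mono (by exact_mod_cast h))

lemma card_image_fH {ℬ : Finset (Submodule ℝ V)} (hb : ∀ H ∈ ℬ, IsHyperplane H) :
    (ℬ.image fH).card = ℬ.card :=
  Finset.card_image_of_injOn (fun H hH H' hH' he => fH_injOn (hb H hH) (hb H' hH') he)

variable [FiniteDimensional ℝ V]

lemma arrRank_le_card (ℬ : Finset (Submodule ℝ V)) (hb : ∀ H ∈ ℬ, IsHyperplane H) :
    arrRank ℬ ≤ ℬ.card := by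
  rw [arrRank_eq_finrank_sp ℬ hb, sp_image]
  exact le_trans (finrank_span_finset_le_card _) (Finset.card_image_le)

omit [FiniteDimensional ℝ V] in
lemma union_hyp {A B : Finset (Submodule ℝ V)} (hA : ∀ H ∈ A, IsHyperplane H)
    (hB : ∀ H ∈ B, IsHyperplane H) : ∀ H ∈ A ∪ B, IsHyperplane H := by
  intro H h; rcases Finset.mem_union.1 h with h|h
  exacts [hA H h, hB H h]

lemma arrRank_union_le (A B : Finset (Submodule ℝ V)) (hA : ∀ H ∈ A, IsHyperplane H)
    (hB : ∀ H ∈ B, IsHyperplane H) :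
    arrRank (A ∪ B) ≤ arrRank A + arrRank B := by
  rw [arrRank_eq_finrank_sp _ (union_hyp hA hB),
    arrRank_eq_finrank_sp A hA, arrRank_eq_finrank_sp B hB, sp_union]
  have := Submodule.finrank_sup_add_finrank_inf_eq (sp A) (sp B)
  omega

lemma arrRank_union_eq_iff (A B : Finset (Submodule ℝ V)) (hA : ∀ H ∈ A, IsHyperplane H)
    (hB : ∀ H ∈ B, IsHyperplane H) :
    arrRank (A ∪ B) = arrRank A + arrRank B ↔ sp A ⊓ sp B = ⊥ := by
  rw [arrRank_eq_finrank_sp _ (union_hyp hA hB),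
    arrRank_eq_finrank_sp A hA, arrRank_eq_finrank_sp B hB, sp_union]
  have h1 := Submodule.finrank_sup_add_finrank_inf_eq (sp A) (sp B)
  have h2 : finrank ℝ ↥(sp A ⊓ sp B) = 0 ↔ sp A ⊓ sp B = ⊥ := Submodule.finrank_eq_zero
  rw [← h2]
  omega

lemma arrRank_mono {A B : Finset (Submodule ℝ V)} (hB : ∀ H ∈ B, IsHyperplane H)
    (h : A ⊆ B) : arrRank A ≤ arrRank B := by
  rw [arrRank_eq_finrank_sp A (fun H hh => hB H (h hh)), arrRank_eq_finrank_sp B hB]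
  exact Submodule.finrank_mono (sp_mono h)

end ArrDecomp

namespace ArrDecomp
open Module Submodule
open scoped Classical

variable {V : Type*} [NormedAddCommGroup V] [NormedSpace ℝ V]

lemma circuit_nonempty {C : Finset (Submodule ℝ V)} (hC : IsCircuit C) : C.Nonempty := by
  rcases Finset.eq_empty_or_nonempty C with rfl | h
  · exact absurd hC.1 (by simp [Dependent])
  · exact h

lemma exists_circuit_of_dependent {A : Finset (Submodule ℝ V)} (hA : Dependent A) :
    ∃ C ⊆ A, IsCircuit C := by
  classical
  induction A using Finset.strongInductionOn with
  | _ A ih =>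
    by_cases h : ∀ B ⊆ A, Dependent B → B = A
    · exact ⟨A, Finset.Subset.refl A, hA, h⟩
    · push_neg at h
      obtain ⟨B, hBA, hBdep, hBne⟩ := h
      obtain ⟨C, hCB, hC⟩ := ih B (Finset.ssubset_iff_subset_ne.2 ⟨hBA, hBne⟩) hBdep
      exact ⟨C, hCB.trans hBA, hC⟩

variable [FiniteDimensional ℝ V]

lemma exists_basis_subfinset (A : Finset (Submodule ℝ V)) (hA : ∀ H ∈ A, IsHyperplane H) :
    ∃ B ⊆ A, sp B = sp A ∧ ∀ C ⊆ B, arrRank C = C.card := by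
  obtain ⟨b, hbsub, hbspan, hbind⟩ :=
    exists_linearIndependent ℝ (fH '' (A : Set (Submodule ℝ V)))
  classical
  have himg : fH '' ↑(A.filter (fun H => fH H ∈ b)) = b := by
    apply Set.Subset.antisymm
    · rintro f ⟨H, hH, rfl⟩
      rw [Finset.mem_coe, Finset.mem_filter] at hH
      exact hH.2
    · intro f hf
      obtain ⟨H, hHA, rfl⟩ := hbsub hf
      refine ⟨H, ?_, rfl⟩
      rw [Finset.mem_coe, Finset.mem_filter]
      exact ⟨Finset.mem_coe.1 hHA, hf⟩
  refine ⟨A.filter (fun H => fH H ∈ b), Finset.filter_subset _ _, ?_, ?_⟩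
  · rw [sp, sp, himg, hbspan]
  · intro C hC
    have hCA : C ⊆ A := hC.trans (Finset.filter_subset _ _)
    have hCb : fH '' ↑C ⊆ b := by
      rw [← himg]; exact Set.image_mono (Finset.coe_subset.2 hC)
    have hind : LinearIndependent ℝ
        ((↑) : (↑(C.image fH) : Set (Module.Dual ℝ V)) → Module.Dual ℝ V) := by
      refine linearIndependent_subtype_iff.2 (LinearIndepOn.mono (linearIndependent_subtype_iff.1 hbind) ?_)
      rw [Finset.coe_image]
      exact hCb
    rw [arrRank_eq_finrank_sp C (fun H hh => hA H (hCA hh)), sp_image,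
      finrank_span_finset_eq_card hind, card_image_fH (fun H hh => hA H (hCA hh))]

lemma additive_of_circuits {A B : Finset (Submodule ℝ V)} (hA : ∀ H ∈ A, IsHyperplane H)
    (hB : ∀ H ∈ B, IsHyperplane H) (hdisj : Disjoint A B)
    (hc : ∀ C ⊆ A ∪ B, IsCircuit C → C ⊆ A ∨ C ⊆ B) :
    arrRank (A ∪ B) = arrRank A + arrRank B := by
  classical
  by_contra hne
  have hlt : arrRank (A ∪ B) < arrRank A + arrRank B :=
    lt_of_le_of_ne (arrRank_union_le A B hA hB) hne
  obtain ⟨BA, hBAsub, hBAsp, hBAind⟩ := exists_basis_subfinset A hA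
  obtain ⟨BB, hBBsub, hBBsp, hBBind⟩ := exists_basis_subfinset B hB
  have hBAhyp : ∀ H ∈ BA, IsHyperplane H := fun H hh => hA H (hBAsub hh)
  have hBBhyp : ∀ H ∈ BB, IsHyperplane H := fun H hh => hB H (hBBsub hh)
  have hcardA : arrRank A = BA.card := by
    rw [arrRank_eq_finrank_sp A hA, ← hBAsp, ← arrRank_eq_finrank_sp BA hBAhyp]
    exact hBAind BA (Finset.Subset.refl _)
  have hcardB : arrRank B = BB.card := by
    rw [arrRank_eq_finrank_sp B hB, ← hBBsp, ← arrRank_eq_finrank_sp BB hBBhyp]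
    exact hBBind BB (Finset.Subset.refl _)
  have hspD : sp (BA ∪ BB) = sp (A ∪ B) := by
    rw [sp_union, sp_union, hBAsp, hBBsp]
  have hrkD : arrRank (BA ∪ BB) = arrRank (A ∪ B) := by
    rw [arrRank_eq_finrank_sp _ (union_hyp hBAhyp hBBhyp),
      arrRank_eq_finrank_sp _ (union_hyp hA hB), hspD]
  have hdisj' : Disjoint BA BB := hdisj.mono hBAsub hBBsub
  have hcardD : (BA ∪ BB).card = BA.card + BB.card := Finset.card_union_of_disjoint hdisj'
  have hdep : Dependent (BA ∪ BB) := by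
    rw [Dependent, hrkD, hcardD]
    omega
  obtain ⟨C, hCD, hC⟩ := exists_circuit_of_dependent hdep
  have hCAB : C ⊆ A ∪ B := hCD.trans (Finset.union_subset_union hBAsub hBBsub)
  have : ¬ Dependent C := by
    rcases hc C hCAB hC with h | h
    · have : C ⊆ BA := fun x hx => by
        rcases Finset.mem_union.1 (hCD hx) with h' | h'
        · exact h'
        · exact absurd (h hx) (fun hxa => (Finset.disjoint_left.1 hdisj) hxa (hBBsub h'))
      rw [Dependent, hBAind C this]; omega
    · have : C ⊆ BB := fun x hx => by
        rcases Finset.mem_union.1 (hCD hx) with h' | h'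
        · exact absurd (h hx) (fun hxb => (Finset.disjoint_left.1 hdisj) (hBAsub h') hxb)
        · exact h'
      rw [Dependent, hBBind C this]; omega
  exact this hC.1

lemma rank_restrict_additive {A B : Finset (Submodule ℝ V)} (hA : ∀ H ∈ A, IsHyperplane H)
    (hB : ∀ H ∈ B, IsHyperplane H)
    (hadd : arrRank (A ∪ B) = arrRank A + arrRank B)
    {C : Finset (Submodule ℝ V)} (hC : C ⊆ A ∪ B) :
    arrRank C = arrRank (C ∩ A) + arrRank (C ∩ B) := by
  classical
  have hbot : sp A ⊓ sp B = ⊥ := (arrRank_union_eq_iff A B hA hB).1 hadd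
  have hCA : ∀ H ∈ C ∩ A, IsHyperplane H := fun H hh => hA H (Finset.mem_inter.1 hh).2
  have hCB : ∀ H ∈ C ∩ B, IsHyperplane H := fun H hh => hB H (Finset.mem_inter.1 hh).2
  have hCeq : C = (C ∩ A) ∪ (C ∩ B) := by
    ext x; simp only [Finset.mem_union, Finset.mem_inter]
    constructor
    · intro hx
      rcases Finset.mem_union.1 (hC hx) with h | h
      · exact Or.inl ⟨hx, h⟩
      · exact Or.inr ⟨hx, h⟩
    · rintro (⟨h, _⟩ | ⟨h, _⟩) <;> exact h
  have hbot' : sp (C ∩ A) ⊓ sp (C ∩ B) = ⊥ := by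
    rw [← le_bot_iff, ← hbot]
    exact inf_le_inf (sp_mono (Finset.inter_subset_right)) (sp_mono (Finset.inter_subset_right))
  have hfin := (arrRank_union_eq_iff _ _ hCA hCB).2 hbot'
  rw [← hCeq] at hfin
  exact hfin

end ArrDecomp

namespace ArrDecomp
open Module Submodule
open scoped Classical

variable {V : Type*} [NormedAddCommGroup V] [NormedSpace ℝ V]

lemma arrRank_empty [FiniteDimensional ℝ V] : arrRank (∅ : Finset (Submodule ℝ V)) = 0 := by
  rw [arrRank, Finset.inf_empty]
  have : finrank ℝ ↥(⊤ : Submodule ℝ V) = finrank ℝ V := finrank_top ℝ V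
  omega

lemma biUnion_hyp {ι : Type*} {s : Finset ι}
    {parts : ι → Finset (Submodule ℝ V)} (hp : ∀ i, ∀ H ∈ parts i, IsHyperplane H) :
    ∀ H ∈ s.biUnion parts, IsHyperplane H := by
  intro H hh
  obtain ⟨i, _, hi⟩ := Finset.mem_biUnion.1 hh
  exact hp i H hi

variable [FiniteDimensional ℝ V]

lemma arrRank_biUnion_le {ι : Type*} (s : Finset ι) (parts : ι → Finset (Submodule ℝ V))
    (hp : ∀ i, ∀ H ∈ parts i, IsHyperplane H) :
    arrRank (s.biUnion parts) ≤ ∑ i ∈ s, arrRank (parts i) := by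
  induction s using Finset.cons_induction with
  | empty => simp [arrRank_empty]
  | cons a s ha ih =>
    rw [Finset.cons_eq_insert, Finset.biUnion_insert, Finset.sum_insert ha]
    have h1 := arrRank_union_le (parts a) (s.biUnion parts) (hp a) (biUnion_hyp hp)
    exact le_trans h1 (add_le_add_right ih _)

lemma additive_of_parts {ι : Type*} (s : Finset ι) (parts : ι → Finset (Submodule ℝ V))
    (hp : ∀ i, ∀ H ∈ parts i, IsHyperplane H)
    (hdisj : ∀ i ∈ s, ∀ j ∈ s, ∀ H, H ∈ parts i → H ∈ parts j → i = j)
    (hc : ∀ C ⊆ s.biUnion parts, IsCircuit C → ∃ i ∈ s, C ⊆ parts i) :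
    arrRank (s.biUnion parts) = ∑ i ∈ s, arrRank (parts i) := by
  induction s using Finset.cons_induction with
  | empty => simp [arrRank_empty]
  | cons a s ha ih =>
    have hmema : a ∈ Finset.cons a s ha := Finset.mem_cons.2 (Or.inl rfl)
    have hsplit : (Finset.cons a s ha).biUnion parts = parts a ∪ s.biUnion parts := by
      rw [Finset.cons_eq_insert, Finset.biUnion_insert]
    have hdisjAB : Disjoint (parts a) (s.biUnion parts) := by
      rw [Finset.disjoint_left]
      intro x hxa hxb
      obtain ⟨j, hj, hxj⟩ := Finset.mem_biUnion.1 hxb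
      have : a = j := hdisj a hmema j (Finset.mem_cons.2 (Or.inr hj)) x hxa hxj
      exact ha (this ▸ hj)
    have hAB : ∀ C ⊆ parts a ∪ s.biUnion parts, IsCircuit C →
        C ⊆ parts a ∨ C ⊆ s.biUnion parts := by
      intro C hC hcC
      obtain ⟨i, hi, hCi⟩ := hc C (by rw [hsplit]; exact hC) hcC
      rcases Finset.mem_cons.1 hi with rfl | hi
      · exact Or.inl hCi
      · exact Or.inr (hCi.trans (Finset.subset_biUnion_of_mem parts hi))
    rw [hsplit, Finset.sum_cons,
      additive_of_circuits (hp a) (biUnion_hyp hp) hdisjAB hAB]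
    congr 1
    apply ih
    · intro i hi j hj H h1 h2
      exact hdisj i (Finset.mem_cons.2 (Or.inr hi)) j (Finset.mem_cons.2 (Or.inr hj)) H h1 h2
    · intro C hCsub hcC
      obtain ⟨i, hi, hCi⟩ := hc C
        (hCsub.trans (by rw [hsplit]; exact Finset.subset_union_right)) hcC
      rcases Finset.mem_cons.1 hi with rfl | hi
      · obtain ⟨x, hx⟩ := circuit_nonempty hcC
        exact absurd (hCi hx) (Finset.disjoint_right.1 hdisjAB (hCsub hx))
      · exact ⟨i, hi, hCi⟩

lemma circuit_subset_part_of_additive {ι : Type*} (s : Finset ι)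
    (parts : ι → Finset (Submodule ℝ V))
    (hp : ∀ i, ∀ H ∈ parts i, IsHyperplane H)
    (hdisj : ∀ i ∈ s, ∀ j ∈ s, ∀ H, H ∈ parts i → H ∈ parts j → i = j)
    (hadd : arrRank (s.biUnion parts) = ∑ i ∈ s, arrRank (parts i))
    {C : Finset (Submodule ℝ V)} (hcC : IsCircuit C) (hCS : C ⊆ s.biUnion parts) :
    ∃ i ∈ s, C ⊆ parts i := by
  obtain ⟨x, hx⟩ := circuit_nonempty hcC
  obtain ⟨i, hi, hxi⟩ := Finset.mem_biUnion.1 (hCS hx)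
  refine ⟨i, hi, ?_⟩
  by_contra hnot
  have hBhyp : ∀ H ∈ (s.erase i).biUnion parts, IsHyperplane H := biUnion_hyp hp
  have hSeq : s.biUnion parts = parts i ∪ (s.erase i).biUnion parts := by
    ext y
    simp only [Finset.mem_biUnion, Finset.mem_union, Finset.mem_erase]
    constructor
    · rintro ⟨j, hj, hyj⟩
      by_cases hji : j = i
      · subst hji; exact Or.inl hyj
      · exact Or.inr ⟨j, ⟨hji, hj⟩, hyj⟩
    · rintro (h | ⟨j, ⟨hji, hj⟩, hyj⟩)
      · exact ⟨i, hi, h⟩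
      · exact ⟨j, hj, hyj⟩
  have hdisjAB : Disjoint (parts i) ((s.erase i).biUnion parts) := by
    rw [Finset.disjoint_left]
    intro y hyi hyB
    obtain ⟨j, hj, hyj⟩ := Finset.mem_biUnion.1 hyB
    exact (Finset.mem_erase.1 hj).1
      ((hdisj j (Finset.mem_of_mem_erase hj) i hi y hyj hyi).symm ▸ rfl)
  have h1 : arrRank (parts i ∪ (s.erase i).biUnion parts)
      ≤ arrRank (parts i) + arrRank ((s.erase i).biUnion parts) :=
    arrRank_union_le _ _ (hp i) hBhyp
  have h2 : arrRank ((s.erase i).biUnion parts) ≤ ∑ j ∈ s.erase i, arrRank (parts j) :=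
    arrRank_biUnion_le _ _ hp
  have h3 : arrRank (parts i) + ∑ j ∈ s.erase i, arrRank (parts j)
      = ∑ j ∈ s, arrRank (parts j) := Finset.add_sum_erase s (fun j => arrRank (parts j)) hi
  have hadd2 : arrRank (parts i ∪ (s.erase i).biUnion parts)
      = arrRank (parts i) + arrRank ((s.erase i).biUnion parts) := by
    have h1' := h1
    rw [← hSeq, hadd] at h1' ⊢
    omega
  have hCS' : C ⊆ parts i ∪ (s.erase i).biUnion parts := hSeq ▸ hCS
  have hrestrict := rank_restrict_additive (hp i) hBhyp hadd2 hCS'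
  have hxB : x ∉ (s.erase i).biUnion parts := Finset.disjoint_left.1 hdisjAB hxi
  have hCA_ne : C ∩ parts i ≠ C := by
    intro h
    exact hnot (by rw [← Finset.inter_eq_left]; exact h)
  have hCB_ne : C ∩ (s.erase i).biUnion parts ≠ C := by
    intro h
    apply hxB
    have hx' : x ∈ C ∩ (s.erase i).biUnion parts := by rw [h]; exact hx
    exact (Finset.mem_inter.1 hx').2
  have hiA : ¬ Dependent (C ∩ parts i) := fun hd =>
    hCA_ne (hcC.2 _ Finset.inter_subset_left hd)
  have hiB : ¬ Dependent (C ∩ (s.erase i).biUnion parts) := fun hd =>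
    hCB_ne (hcC.2 _ Finset.inter_subset_left hd)
  have hrA : arrRank (C ∩ parts i) = (C ∩ parts i).card := by
    have hle := arrRank_le_card (C ∩ parts i)
      (fun H hh => hp i H (Finset.mem_inter.1 hh).2)
    rw [Dependent, not_lt] at hiA
    omega
  have hrB : arrRank (C ∩ (s.erase i).biUnion parts)
      = (C ∩ (s.erase i).biUnion parts).card := by
    have hle := arrRank_le_card (C ∩ (s.erase i).biUnion parts)
      (fun H hh => hBhyp H (Finset.mem_inter.1 hh).2)
    rw [Dependent, not_lt] at hiB
    omega
  have hCsplit : C = (C ∩ parts i) ∪ (C ∩ (s.erase i).biUnion parts) := by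
    rw [← Finset.inter_union_distrib_left]
    exact (Finset.inter_eq_left.2 hCS').symm
  have hcard : C.card = (C ∩ parts i).card + (C ∩ (s.erase i).biUnion parts).card := by
    conv_lhs => rw [hCsplit]
    exact Finset.card_union_of_disjoint
      (Finset.disjoint_left.2 fun y hy1 hy2 =>
        Finset.disjoint_left.1 hdisjAB (Finset.mem_inter.1 hy1).2 (Finset.mem_inter.1 hy2).2)
  have hdep := hcC.1
  rw [Dependent] at hdep
  omega

end ArrDecomp

namespace ArrDecomp
open Module Submodule
open scoped Classical

variable {V : Type*} [NormedAddCommGroup V] [NormedSpace ℝ V]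

lemma reachable_ind {α : Type*} {G : SimpleGraph α} {P : α → Prop}
    (hstep : ∀ u v, G.Adj u v → P u → P v) {u v : α} (h : G.Reachable u v) (hu : P u) :
    P v := by
  obtain ⟨p⟩ := h
  induction p with
  | nil => exact hu
  | cons h' p ih => exact ih (hstep _ _ h' hu)

lemma circuit_mk_eq {𝒜 C : Finset (Submodule ℝ V)} (hCA : C ⊆ 𝒜) (hC : IsCircuit C)
    {H H' : Submodule ℝ V} (hH : H ∈ C) (hH' : H' ∈ C) :
    (circuitGraph 𝒜).connectedComponentMk ⟨H, hCA hH⟩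
      = (circuitGraph 𝒜).connectedComponentMk ⟨H', hCA hH'⟩ := by
  by_cases he : H = H'
  · subst he; rfl
  · exact (SimpleGraph.ConnectedComponent.eq).2
      ⟨SimpleGraph.Walk.cons (⟨by simpa using he, C, hCA, hC, hH, hH'⟩ :
        (circuitGraph 𝒜).Adj ⟨H, hCA hH⟩ ⟨H', hCA hH'⟩) SimpleGraph.Walk.nil⟩

end ArrDecomp

namespace ArrDecomp
open Module Submodule
open scoped Classical

variable {V : Type*} [NormedAddCommGroup V] [NormedSpace ℝ V] [FiniteDimensional ℝ V]
variable {𝒜 : Finset (Submodule ℝ V)}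

lemma circuit_part (h𝒜 : ∀ H ∈ 𝒜, IsHyperplane H) {n : ℕ}
    {parts : Fin n → Finset (Submodule ℝ V)}
    (hdisj : ∀ i j H, H ∈ parts i → H ∈ parts j → i = j)
    (hcover : ∀ H, H ∈ 𝒜 ↔ ∃ i, H ∈ parts i)
    (hrank : arrRank 𝒜 = ∑ i, arrRank (parts i))
    {C : Finset (Submodule ℝ V)} (hC : IsCircuit C) (hCA : C ⊆ 𝒜) :
    ∃ i, C ⊆ parts i := by
  have hpsub : ∀ i, ∀ H ∈ parts i, H ∈ 𝒜 := fun i H h => (hcover H).2 ⟨i, h⟩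
  have hp : ∀ i, ∀ H ∈ parts i, IsHyperplane H := fun i H h => h𝒜 H (hpsub i H h)
  have hbiU : 𝒜 = Finset.univ.biUnion parts := by
    ext H
    rw [Finset.mem_biUnion]
    constructor
    · intro h; obtain ⟨i, hi⟩ := (hcover H).1 h; exact ⟨i, Finset.mem_univ i, hi⟩
    · rintro ⟨i, _, hi⟩; exact (hcover H).2 ⟨i, hi⟩
  have hadd' : arrRank (Finset.univ.biUnion parts) = ∑ i, arrRank (parts i) := by
    rw [← hbiU]; exact hrank
  obtain ⟨i, _, hi⟩ := circuit_subset_part_of_additive Finset.univ parts hp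
    (fun i _ j _ H h1 h2 => hdisj i j H h1 h2) hadd' hC (by rw [← hbiU]; exact hCA)
  exact ⟨i, hi⟩

lemma mem_part_of_reachable (h𝒜 : ∀ H ∈ 𝒜, IsHyperplane H) {n : ℕ}
    {parts : Fin n → Finset (Submodule ℝ V)}
    (hdisj : ∀ i j H, H ∈ parts i → H ∈ parts j → i = j)
    (hcover : ∀ H, H ∈ 𝒜 ↔ ∃ i, H ∈ parts i)
    (hrank : arrRank 𝒜 = ∑ i, arrRank (parts i))
    {i : Fin n} {u v : {H // H ∈ 𝒜}} (hr : (circuitGraph 𝒜).Reachable u v)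
    (hu : u.1 ∈ parts i) : v.1 ∈ parts i := by
  refine reachable_ind (P := fun w => w.1 ∈ parts i) ?_ hr hu
  rintro a b ⟨-, ℬ, hsub, hcirc, ha, hb⟩ hai
  obtain ⟨j, hj⟩ := circuit_part h𝒜 hdisj hcover hrank hcirc hsub
  have : i = j := hdisj i j a.1 hai (hj ha)
  subst this
  exact hj hb

lemma decomposable_of_split {P K D : Finset (Submodule ℝ V)} (hKD : K ∪ D = P)
    (hdisj : Disjoint K D) (hK : K.Nonempty) (hD : D.Nonempty)
    (hadd : arrRank P = arrRank K + arrRank D) : Decomposable P := by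
  refine ⟨2, ![K, D], le_refl 2, ?_, ?_, ?_, ?_⟩
  · intro j
    fin_cases j
    · exact hK
    · exact hD
  · intro a b H ha hb
    fin_cases a <;> fin_cases b
    · rfl
    · exact absurd hb (Finset.disjoint_left.1 hdisj ha)
    · exact absurd ha (Finset.disjoint_left.1 hdisj hb)
    · rfl
  · intro H
    rw [← hKD]
    constructor
    · intro h
      rcases Finset.mem_union.1 h with h | h
      · exact ⟨0, h⟩
      · exact ⟨1, h⟩
    · rintro ⟨j, hj⟩
      fin_cases j
      · exact Finset.mem_union_left _ hj
      · exact Finset.mem_union_right _ hj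
  · rw [hadd, Fin.sum_univ_two]
    rfl


lemma part_connected (h𝒜 : ∀ H ∈ 𝒜, IsHyperplane H) {n : ℕ}
    {parts : Fin n → Finset (Submodule ℝ V)}
    (hdec : IsIndecomposableDecomposition 𝒜 n parts)
    {i : Fin n} {H H' : Submodule ℝ V} (hH : H ∈ 𝒜) (hH' : H' ∈ 𝒜)
    (hHi : H ∈ parts i) (hH'i : H' ∈ parts i) :
    (circuitGraph 𝒜).Reachable ⟨H, hH⟩ ⟨H', hH'⟩ := by
  obtain ⟨hne, hdisj, hcover, hrank, hind⟩ := hdec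
  by_contra hnr
  have hpsub : ∀ j, ∀ H'' ∈ parts j, H'' ∈ 𝒜 := fun j H'' h => (hcover H'').2 ⟨j, h⟩
  set p : Submodule ℝ V → Prop :=
    fun H'' => ∃ h'' : H'' ∈ 𝒜, (circuitGraph 𝒜).Reachable ⟨H, hH⟩ ⟨H'', h''⟩ with hp_def
  set K : Finset (Submodule ℝ V) := (parts i).filter p with hK_def
  set D : Finset (Submodule ℝ V) := (parts i).filter (fun H'' => ¬ p H'') with hD_def
  have hunion : K ∪ D = parts i := Finset.filter_union_filter_not_eq p (parts i)
  have hdisjKD : Disjoint K D := Finset.disjoint_filter_filter_not (parts i) (parts i) p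
  have hHK : H ∈ K := Finset.mem_filter.2 ⟨hHi, hH, SimpleGraph.Reachable.refl _⟩
  have hH'D : H' ∈ D := by
    refine Finset.mem_filter.2 ⟨hH'i, ?_⟩
    rintro ⟨h'', hr⟩
    exact hnr hr
  have hKhyp : ∀ H'' ∈ K, IsHyperplane H'' :=
    fun H'' h => h𝒜 H'' (hpsub i H'' (Finset.mem_filter.1 h).1)
  have hDhyp : ∀ H'' ∈ D, IsHyperplane H'' :=
    fun H'' h => h𝒜 H'' (hpsub i H'' (Finset.mem_filter.1 h).1)
  have hcsplit : ∀ C ⊆ K ∪ D, IsCircuit C → C ⊆ K ∨ C ⊆ D := by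
    intro C hC hcC
    have hCparts : C ⊆ parts i := by rw [← hunion]; exact hC
    have hCA : C ⊆ 𝒜 := fun x hx => hpsub i x (hCparts hx)
    by_cases hex : ∃ y ∈ C, y ∈ K
    · obtain ⟨y, hyC, hyK⟩ := hex
      obtain ⟨hy𝒜, hyr⟩ := (Finset.mem_filter.1 hyK).2
      left
      intro z hz
      refine Finset.mem_filter.2 ⟨hCparts hz, hCA hz, ?_⟩
      by_cases hzy : z = y
      · subst hzy; exact hyr
      · refine hyr.trans ?_
        exact SimpleGraph.Adj.reachable
          ⟨by simpa using (fun h => hzy h.symm), C, hCA, hcC, hyC, hz⟩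
    · push_neg at hex
      right
      intro z hz
      have := hCparts hz
      rw [← hunion] at this
      rcases Finset.mem_union.1 this with h | h
      · exact absurd h (hex z hz)
      · exact h
  have haddKD : arrRank (K ∪ D) = arrRank K + arrRank D :=
    additive_of_circuits hKhyp hDhyp hdisjKD hcsplit
  apply hind i
  rw [← hunion]
  exact decomposable_of_split rfl hdisjKD ⟨H, hHK⟩ ⟨H', hH'D⟩ haddKD

lemma char_parts (h𝒜 : ∀ H ∈ 𝒜, IsHyperplane H) {n : ℕ}
    {parts : Fin n → Finset (Submodule ℝ V)}
    (hdec : IsIndecomposableDecomposition 𝒜 n parts)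
    (i : Fin n) (H H' : Submodule ℝ V) (hH : H ∈ 𝒜) (hH' : H' ∈ 𝒜) (hHi : H ∈ parts i) :
    H' ∈ parts i ↔ (circuitGraph 𝒜).Reachable ⟨H, hH⟩ ⟨H', hH'⟩ := by
  constructor
  · intro h
    exact part_connected h𝒜 hdec hH hH' hHi h
  · intro hr
    exact mem_part_of_reachable h𝒜 hdec.2.1 hdec.2.2.1 hdec.2.2.2.1 hr hHi

lemma exists_decomp (h𝒜 : ∀ H ∈ 𝒜, IsHyperplane H) :
    ∃ (n : ℕ) (parts : Fin n → Finset (Submodule ℝ V)),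
      IsIndecomposableDecomposition 𝒜 n parts := by
  classical
  set G := circuitGraph 𝒜 with hG
  set n := Fintype.card G.ConnectedComponent with hn
  set e : G.ConnectedComponent ≃ Fin n := Fintype.equivFin _ with he
  set parts : Fin n → Finset (Submodule ℝ V) := fun i =>
    (Finset.univ.filter
      (fun v : {H // H ∈ 𝒜} => e (G.connectedComponentMk v) = i)).image Subtype.val
    with hparts
  have hmem : ∀ (H : Submodule ℝ V) (i : Fin n),
      H ∈ parts i ↔ ∃ h : H ∈ 𝒜, e (G.connectedComponentMk ⟨H, h⟩) = i := by
    intro H i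
    rw [hparts]
    simp only [Finset.mem_image, Finset.mem_filter, Finset.mem_univ, true_and]
    constructor
    · rintro ⟨v, hv, rfl⟩
      exact ⟨v.2, hv⟩
    · rintro ⟨h, hh⟩
      exact ⟨⟨H, h⟩, hh, rfl⟩
  have hcover : ∀ H, H ∈ 𝒜 ↔ ∃ i, H ∈ parts i := by
    intro H
    constructor
    · intro h
      exact ⟨e (G.connectedComponentMk ⟨H, h⟩), (hmem H _).2 ⟨h, rfl⟩⟩
    · rintro ⟨i, hi⟩
      exact ((hmem H i).1 hi).choose
  have hdisj : ∀ i j H, H ∈ parts i → H ∈ parts j → i = j := by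
    intro i j H hi hj
    obtain ⟨h1, hh1⟩ := (hmem H i).1 hi
    obtain ⟨h2, hh2⟩ := (hmem H j).1 hj
    rw [← hh1, ← hh2]
  have hne : ∀ i, (parts i).Nonempty := by
    intro i
    obtain ⟨v, hv⟩ := (e.symm i).exists_rep
    refine ⟨v.1, (hmem v.1 i).2 ⟨v.2, ?_⟩⟩
    have hv' : G.connectedComponentMk v = e.symm i := hv
    rw [show (⟨v.1, v.2⟩ : {H // H ∈ 𝒜}) = v from rfl, hv', Equiv.apply_symm_apply]
  have hbiU : 𝒜 = Finset.univ.biUnion parts := by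
    ext H
    rw [Finset.mem_biUnion]
    constructor
    · intro h
      obtain ⟨i, hi⟩ := (hcover H).1 h
      exact ⟨i, Finset.mem_univ i, hi⟩
    · rintro ⟨i, -, hi⟩
      exact (hcover H).2 ⟨i, hi⟩
  have hpsub : ∀ i, ∀ H ∈ parts i, H ∈ 𝒜 := fun i H h => (hcover H).2 ⟨i, h⟩
  have hp : ∀ i, ∀ H ∈ parts i, IsHyperplane H := fun i H h => h𝒜 H (hpsub i H h)
  have hcirc_part : ∀ C ⊆ 𝒜, IsCircuit C → ∃ i, C ⊆ parts i := by
    intro C hCA hC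
    obtain ⟨x, hx⟩ := circuit_nonempty hC
    refine ⟨e (G.connectedComponentMk ⟨x, hCA hx⟩), fun z hz => ?_⟩
    refine (hmem z _).2 ⟨hCA hz, ?_⟩
    rw [hG] at *
    rw [circuit_mk_eq hCA hC hz hx]
  have hrank : arrRank 𝒜 = ∑ i, arrRank (parts i) := by
    rw [hbiU]
    refine additive_of_parts Finset.univ parts hp
      (fun i _ j _ H h1 h2 => hdisj i j H h1 h2) ?_
    intro C hC hcC
    obtain ⟨i, hi⟩ := hcirc_part C (by rw [hbiU]; exact hC) hcC
    exact ⟨i, Finset.mem_univ i, hi⟩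
  refine ⟨n, parts, hne, hdisj, hcover, hrank, ?_⟩
  intro i hdecomp
  obtain ⟨m, q, hm2, hqne, hqdisj, hqcover, hqrank⟩ := hdecomp
  have hqsub : ∀ j, ∀ H ∈ q j, H ∈ parts i := fun j H h => (hqcover H).2 ⟨j, h⟩
  have hqhyp : ∀ j, ∀ H ∈ q j, IsHyperplane H := fun j H h => hp i H (hqsub j H h)
  have hqbiU : parts i = Finset.univ.biUnion q := by
    ext H
    rw [Finset.mem_biUnion]
    constructor
    · intro h
      obtain ⟨j, hj⟩ := (hqcover H).1 h
      exact ⟨j, Finset.mem_univ j, hj⟩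
    · rintro ⟨j, -, hj⟩
      exact (hqcover H).2 ⟨j, hj⟩
  have hqrank' : arrRank (Finset.univ.biUnion q) = ∑ j, arrRank (q j) := by
    rw [← hqbiU]
    exact hqrank
  have hcirc_q : ∀ C ⊆ parts i, IsCircuit C → ∃ j, C ⊆ q j := by
    intro C hC hcC
    obtain ⟨j, -, hj⟩ := circuit_subset_part_of_additive Finset.univ q hqhyp
      (fun a _ b _ H h1 h2 => hqdisj a b H h1 h2) hqrank' hcC (by rw [← hqbiU]; exact hC)
    exact ⟨j, hj⟩
  set j0 : Fin m := ⟨0, by omega⟩ with hj0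
  set j1 : Fin m := ⟨1, by omega⟩ with hj1
  obtain ⟨H0, hH0⟩ := hqne j0
  obtain ⟨H1, hH1⟩ := hqne j1
  have hH0p : H0 ∈ parts i := hqsub j0 H0 hH0
  have hH1p : H1 ∈ parts i := hqsub j1 H1 hH1
  obtain ⟨h0𝒜, hc0⟩ := (hmem H0 i).1 hH0p
  obtain ⟨h1𝒜, hc1⟩ := (hmem H1 i).1 hH1p
  have hreach : G.Reachable ⟨H0, h0𝒜⟩ ⟨H1, h1𝒜⟩ := by
    rw [← SimpleGraph.ConnectedComponent.eq]
    exact e.injective (hc0.trans hc1.symm)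
  have hstep : ∀ u v : {H // H ∈ 𝒜}, G.Adj u v → u.1 ∈ q j0 → v.1 ∈ q j0 := by
    rintro u v ⟨-, ℬ, hsub, hcirc, hu, hv⟩ huq
    have hup : u.1 ∈ parts i := hqsub j0 u.1 huq
    obtain ⟨hu𝒜, hcu⟩ := (hmem u.1 i).1 hup
    have hBp : ℬ ⊆ parts i := by
      intro z hz
      refine (hmem z i).2 ⟨hsub hz, ?_⟩
      rw [circuit_mk_eq hsub hcirc hz hu]
      exact hcu
    obtain ⟨j', hj'⟩ := hcirc_q ℬ hBp hcirc
    have : j' = j0 := hqdisj j' j0 u.1 (hj' hu) huq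
    subst this
    exact hj' hv
  have hH1q0 : H1 ∈ q j0 := reachable_ind (P := fun w => w.1 ∈ q j0) hstep hreach hH0
  have : j0 = j1 := hqdisj j0 j1 H1 hH1q0 hH1
  rw [hj0, hj1] at this
  exact absurd (congrArg Fin.val this) (by simp)

lemma uniq_decomp (h𝒜 : ∀ H ∈ 𝒜, IsHyperplane H) {n n' : ℕ}
    {parts : Fin n → Finset (Submodule ℝ V)} {parts' : Fin n' → Finset (Submodule ℝ V)}
    (hdec : IsIndecomposableDecomposition 𝒜 n parts)
    (hdec' : IsIndecomposableDecomposition 𝒜 n' parts') :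
    ∃ e : Fin n ≃ Fin n', ∀ i, parts' (e i) = parts i := by
  classical
  choose rep hrep using hdec.1
  have hrep𝒜 : ∀ i, rep i ∈ 𝒜 := fun i => (hdec.2.2.1 (rep i)).2 ⟨i, hrep i⟩
  have hex : ∀ i, ∃ j, rep i ∈ parts' j := fun i => (hdec'.2.2.1 (rep i)).1 (hrep𝒜 i)
  choose g hg using hex
  have hparts_eq : ∀ i, parts' (g i) = parts i := by
    intro i
    ext H
    by_cases hHA : H ∈ 𝒜
    · rw [char_parts h𝒜 hdec' (g i) (rep i) H (hrep𝒜 i) hHA (hg i),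
        char_parts h𝒜 hdec i (rep i) H (hrep𝒜 i) hHA (hrep i)]
    · constructor
      · intro h
        exact absurd ((hdec'.2.2.1 H).2 ⟨g i, h⟩) hHA
      · intro h
        exact absurd ((hdec.2.2.1 H).2 ⟨i, h⟩) hHA
  have hinj : Function.Injective g := by
    intro a b hab
    apply hdec.2.1 a b (rep a) (hrep a)
    rw [← hparts_eq b, ← hab, hparts_eq a]
    exact hrep a
  have hsurj : Function.Surjective g := by
    intro j
    obtain ⟨H, hH⟩ := hdec'.1 j
    have hHA : H ∈ 𝒜 := (hdec'.2.2.1 H).2 ⟨j, hH⟩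
    obtain ⟨i, hi⟩ := (hdec.2.2.1 H).1 hHA
    refine ⟨i, hdec'.2.1 (g i) j H ?_ hH⟩
    rw [hparts_eq i]
    exact hi
  exact ⟨Equiv.ofBijective g ⟨hinj, hsurj⟩, hparts_eq⟩

end ArrDecomp

/-- Every central arrangement has a decomposition into indecomposable
subarrangements, unique up to order, and it coincides with the partition of `𝒜`
into the connected components of the graph `Γ(𝒜)`. -/
theorem unique_decomposition_into_indecomposables
    {V : Type*} [NormedAddCommGroup V] [NormedSpace ℝ V] [FiniteDimensional ℝ V]
    (𝒜 : Finset (Submodule ℝ V)) (h𝒜 : IsCentralArrangement 𝒜) :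
    (∃ (n : ℕ) (parts : Fin n → Finset (Submodule ℝ V)),
        IsIndecomposableDecomposition 𝒜 n parts) ∧
    (∀ (n n' : ℕ) (parts : Fin n → Finset (Submodule ℝ V))
        (parts' : Fin n' → Finset (Submodule ℝ V)),
        IsIndecomposableDecomposition 𝒜 n parts →
        IsIndecomposableDecomposition 𝒜 n' parts' →
        ∃ e : Fin n ≃ Fin n', ∀ i, parts' (e i) = parts i) ∧
    (∀ (n : ℕ) (parts : Fin n → Finset (Submodule ℝ V)),
        IsIndecomposableDecomposition 𝒜 n parts →
        ∀ (i : Fin n) (H H' : Submodule ℝ V) (hH : H ∈ 𝒜) (hH' : H' ∈ 𝒜),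
          H ∈ parts i →
            (H' ∈ parts i ↔ (circuitGraph 𝒜).Reachable ⟨H, hH⟩ ⟨H', hH'⟩)) := by
  refine ⟨ArrDecomp.exists_decomp h𝒜, ?_, ?_⟩
  · intro n n' parts parts' hdec hdec'
    exact ArrDecomp.uniq_decomp h𝒜 hdec hdec'
  · intro n parts hdec i H H' hH hH' hHi
    exact ArrDecomp.char_parts h𝒜 hdec i H H' hH hH' hHi
end

section
/- Let n ≥ 3 be a natural number and let 𝒜 = {ker(xᵢ − xⱼ) | 1 ≤ i < j ≤ n} be the braid arrangement in ℝⁿ. Then 𝒜 is indecomposable. -/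
open Set

section AuxIndec

open Module Submodule

variable {V : Type*} [NormedAddCommGroup V] [NormedSpace ℝ V]

noncomputable def spanNormals (ℬ : Finset (Submodule ℝ V)) : Submodule ℝ (Module.Dual ℝ V) :=
  Submodule.span ℝ {f : Module.Dual ℝ V | f ≠ 0 ∧ LinearMap.ker f ∈ ℬ}

lemma mem_spanNormals {ℬ : Finset (Submodule ℝ V)} {f : Module.Dual ℝ V}
    (hf : f ≠ 0) (hker : LinearMap.ker f ∈ ℬ) : f ∈ spanNormals ℬ :=
  Submodule.subset_span ⟨hf, hker⟩

lemma spanNormals_dualCoannihilator {ℬ : Finset (Submodule ℝ V)}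
    (hc : IsCentralArrangement ℬ) :
    (spanNormals ℬ).dualCoannihilator = ℬ.inf id := by
  ext x
  rw [Submodule.mem_dualCoannihilator, Submodule.mem_finsetInf]
  constructor
  · intro h H hH
    obtain ⟨f, hf0, hfk⟩ := hc H hH
    have hfx : f x = 0 := h f (mem_spanNormals hf0 (by rw [hfk]; exact hH))
    show x ∈ id H
    rw [id_eq, ← hfk]
    exact LinearMap.mem_ker.mpr hfx
  · intro h φ hφ
    have hle : spanNormals ℬ ≤ LinearMap.ker (Module.Dual.eval ℝ V x) := by
      rw [spanNormals, Submodule.span_le]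
      rintro f ⟨hf0, hfk⟩
      have hx : x ∈ LinearMap.ker f := by
        have := h _ hfk
        simpa using this
      simpa [LinearMap.mem_ker, Module.Dual.eval_apply] using hx
    simpa [LinearMap.mem_ker, Module.Dual.eval_apply] using hle hφ

lemma arrRank_eq_finrank_spanNormals [FiniteDimensional ℝ V] {ℬ : Finset (Submodule ℝ V)}
    (hc : IsCentralArrangement ℬ) :
    arrRank ℬ = Module.finrank ℝ ↥(spanNormals ℬ) := by
  have h := Subspace.finrank_add_finrank_dualCoannihilator_eq (spanNormals ℬ)
  rw [spanNormals_dualCoannihilator hc] at h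
  have h2 : Module.finrank ℝ ↥(ℬ.inf id) ≤ Module.finrank ℝ V := Submodule.finrank_le _
  unfold arrRank
  omega

lemma finrank_finset_sup_le {ι : Type*} [DecidableEq ι] {D : Type*} [AddCommGroup D]
    [Module ℝ D] [FiniteDimensional ℝ D] (W : ι → Submodule ℝ D) (s : Finset ι) :
    Module.finrank ℝ ↥(s.sup W) ≤ ∑ i ∈ s, Module.finrank ℝ ↥(W i) := by
  induction s using Finset.induction with
  | empty => simp
  | @insert a s ha ih =>
    rw [Finset.sup_insert, Finset.sum_insert ha]
    have h := Submodule.finrank_sup_add_finrank_inf_eq (W a) (s.sup W)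
    omega

lemma finset_sup_inf_compl_eq_bot {k : ℕ} {D : Type*} [AddCommGroup D] [Module ℝ D]
    [FiniteDimensional ℝ D] (W : Fin k → Submodule ℝ D)
    (h : Module.finrank ℝ ↥((Finset.univ : Finset (Fin k)).sup W)
      = ∑ i, Module.finrank ℝ ↥(W i))
    (s : Finset (Fin k)) : s.sup W ⊓ sᶜ.sup W = ⊥ := by
  have hsup : s.sup W ⊔ sᶜ.sup W = (Finset.univ : Finset (Fin k)).sup W := by
    rw [← Finset.sup_union, Finset.union_compl]
  have h1 := Submodule.finrank_sup_add_finrank_inf_eq (s.sup W) (sᶜ.sup W)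
  have h2 := finrank_finset_sup_le W s
  have h3 := finrank_finset_sup_le W sᶜ
  have h4 : ∑ i ∈ s, Module.finrank ℝ ↥(W i) + ∑ i ∈ sᶜ, Module.finrank ℝ ↥(W i)
      = ∑ i, Module.finrank ℝ ↥(W i) := Finset.sum_add_sum_compl s _
  rw [hsup, h] at h1
  have h0 : Module.finrank ℝ ↥(s.sup W ⊓ sᶜ.sup W) = 0 := by omega
  exact Submodule.finrank_eq_zero.mp h0

lemma spanNormals_eq_sup {k : ℕ} {𝒜 : Finset (Submodule ℝ V)}
    (parts : Fin k → Finset (Submodule ℝ V))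
    (hcover : ∀ H, H ∈ 𝒜 ↔ ∃ i, H ∈ parts i) :
    spanNormals 𝒜 = (Finset.univ : Finset (Fin k)).sup (fun i => spanNormals (parts i)) := by
  rw [Finset.sup_univ_eq_iSup]
  unfold spanNormals
  rw [← Submodule.span_iUnion]
  congr 1
  ext f
  simp only [Set.mem_iUnion, Set.mem_setOf_eq]
  constructor
  · rintro ⟨h0, hk⟩
    obtain ⟨i, hi⟩ := (hcover _).mp hk
    exact ⟨i, h0, hi⟩
  · rintro ⟨i, h0, hi⟩
    exact ⟨h0, (hcover _).mpr ⟨i, hi⟩⟩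

end AuxIndec

open Classical in
/-- The braid arrangement `{ker (xᵢ - xⱼ) | 1 ≤ i < j ≤ n}` in `ℝⁿ` (`n ≥ 3`) is
indecomposable. -/
theorem braid_arrangement_indecomposable (n : ℕ) (hn : 3 ≤ n) :
    ¬ Decomposable (Finset.image
        (fun p : Fin n × Fin n =>
          LinearMap.ker ((LinearMap.proj p.1 : (Fin n → ℝ) →ₗ[ℝ] ℝ)
            - (LinearMap.proj p.2 : (Fin n → ℝ) →ₗ[ℝ] ℝ)))
        (Finset.univ.filter fun p : Fin n × Fin n => p.1 < p.2)) := by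
  intro hdec
  set V := Fin n → ℝ with hV
  set P : Fin n → Module.Dual ℝ V := fun a => (LinearMap.proj a : V →ₗ[ℝ] ℝ) with hP
  set 𝒜 : Finset (Submodule ℝ V) := Finset.image
      (fun p : Fin n × Fin n => LinearMap.ker (P p.1 - P p.2))
      (Finset.univ.filter fun p : Fin n × Fin n => p.1 < p.2) with h𝒜
  -- nonzeroness of the normals
  have hnz : ∀ a b : Fin n, a ≠ b → P a - P b ≠ 0 := by
    intro a b hab h
    have := DFunLike.congr_fun h (Pi.single a (1:ℝ))
    simp [hP, Pi.single_apply, hab.symm] at this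
  -- symmetry of kernels
  have hkersymm : ∀ a b : Fin n, LinearMap.ker (P a - P b) = LinearMap.ker (P b - P a) := by
    intro a b
    ext x
    simp only [LinearMap.mem_ker, LinearMap.sub_apply, sub_eq_zero]
    exact eq_comm
  -- membership of edges
  have hmemA : ∀ a b : Fin n, a ≠ b → LinearMap.ker (P a - P b) ∈ 𝒜 := by
    intro a b hab
    rcases lt_or_gt_of_ne hab with h | h
    · exact Finset.mem_image.mpr ⟨(a, b), by simpa using h, rfl⟩
    · rw [hkersymm]
      exact Finset.mem_image.mpr ⟨(b, a), by simpa using h, rfl⟩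
  -- the arrangement is central
  have hcentral : IsCentralArrangement 𝒜 := by
    intro H hH
    obtain ⟨p, hp, rfl⟩ := Finset.mem_image.mp hH
    simp only [Finset.mem_filter, Finset.mem_univ, true_and] at hp
    exact ⟨P p.1 - P p.2, hnz _ _ (ne_of_lt hp), rfl⟩
  obtain ⟨k, parts, hk2, hne, hdisj, hcover, hrank⟩ := hdec
  have hcentral' : ∀ i, IsCentralArrangement (parts i) := fun i H hH =>
    hcentral H ((hcover H).mpr ⟨i, hH⟩)
  set W : Fin k → Submodule ℝ (Module.Dual ℝ V) := fun i => spanNormals (parts i) with hW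
  -- rank additivity in terms of spans of normals
  have hranks : Module.finrank ℝ ↥((Finset.univ : Finset (Fin k)).sup W)
      = ∑ i, Module.finrank ℝ ↥(W i) := by
    have h1 := arrRank_eq_finrank_spanNormals (V := V) hcentral
    rw [spanNormals_eq_sup parts hcover] at h1
    calc Module.finrank ℝ ↥((Finset.univ : Finset (Fin k)).sup W) = arrRank 𝒜 := h1.symm
      _ = ∑ i, arrRank (parts i) := hrank
      _ = ∑ i, Module.finrank ℝ ↥(W i) :=
        Finset.sum_congr rfl fun i _ => arrRank_eq_finrank_spanNormals (hcentral' i)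
  have hsplit := finset_sup_inf_compl_eq_bot W hranks
  -- membership in the W's
  have hmemW : ∀ (a b : Fin n) (i : Fin k), a ≠ b →
      LinearMap.ker (P a - P b) ∈ parts i → P a - P b ∈ W i := by
    intro a b i hab h
    exact mem_spanNormals (hnz a b hab) h
  -- zero lemmas from the splitting
  have pairwise0 : ∀ (i j : Fin k), i ≠ j → ∀ v, v ∈ W i → v ∈ W j → v = 0 := by
    intro i j hij v hvi hvj
    have h := hsplit {i}
    have hleA : W i ≤ ({i} : Finset (Fin k)).sup W :=
      Finset.le_sup (Finset.mem_singleton_self i)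
    have hleB : W j ≤ (({i} : Finset (Fin k))ᶜ).sup W :=
      Finset.le_sup (by simp [Finset.mem_compl, hij.symm])
    have : v ∈ (⊥ : Submodule ℝ (Module.Dual ℝ V)) :=
      h ▸ Submodule.mem_inf.mpr ⟨hleA hvi, hleB hvj⟩
    simpa using this
  have triple0 : ∀ (i j l : Fin k), l ≠ i → l ≠ j → ∀ v, v ∈ W i ⊔ W j → v ∈ W l → v = 0 := by
    intro i j l hli hlj v hvij hvl
    have h := hsplit {i, j}
    have hleA : W i ⊔ W j ≤ ({i, j} : Finset (Fin k)).sup W :=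
      sup_le (Finset.le_sup (by simp)) (Finset.le_sup (by simp))
    have hleB : W l ≤ (({i, j} : Finset (Fin k))ᶜ).sup W :=
      Finset.le_sup (by simp [Finset.mem_compl, hli, hlj])
    have : v ∈ (⊥ : Submodule ℝ (Module.Dual ℝ V)) :=
      h ▸ Submodule.mem_inf.mpr ⟨hleA hvij, hleB hvl⟩
    simpa using this
  -- index of an edge
  have hidx : ∀ a b : Fin n, a ≠ b → ∃ i, LinearMap.ker (P a - P b) ∈ parts i :=
    fun a b hab => (hcover _).mp (hmemA a b hab)
  choose ind hind using hidx
  have huniq : ∀ (a b : Fin n) (hab : a ≠ b) (j : Fin k),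
      LinearMap.ker (P a - P b) ∈ parts j → j = ind a b hab :=
    fun a b hab j hj => hdisj j (ind a b hab) _ hj (hind a b hab)
  have hsymm : ∀ (a b : Fin n) (hab : a ≠ b), ind a b hab = ind b a hab.symm := by
    intro a b hab
    refine huniq b a hab.symm (ind a b hab) ?_
    rw [← hkersymm]
    exact hind a b hab
  -- adjacent edges lie in the same part
  have hadj : ∀ (a b c : Fin n) (hab : a ≠ b) (hbc : b ≠ c), a ≠ c →
      ind a b hab = ind b c hbc := by
    intro a b c hab hbc hac
    by_contra hij
    set i := ind a b hab
    set j := ind b c hbc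
    set l := ind a c hac
    have hui : P a - P b ∈ W i := hmemW a b i hab (hind a b hab)
    have hvj : P b - P c ∈ W j := hmemW b c j hbc (hind b c hbc)
    have hwl : P a - P c ∈ W l := hmemW a c l hac (hind a c hac)
    by_cases hl1 : l = i
    · have h1 : P a - P c ∈ W i := hl1 ▸ hwl
      have h2 : P b - P c ∈ W i := by
        have := Submodule.sub_mem (W i) h1 hui
        simpa [sub_sub_sub_cancel_left] using this
      exact hnz b c hbc (pairwise0 i j hij _ h2 hvj)
    · by_cases hl2 : l = j
      · have h1 : P a - P c ∈ W j := hl2 ▸ hwl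
        have h2 : P a - P b ∈ W j := by
          have := Submodule.sub_mem (W j) h1 hvj
          simpa [sub_sub_sub_cancel_right] using this
        exact hnz a b hab (pairwise0 i j hij _ hui h2)
      · have h1 : P a - P c ∈ W i ⊔ W j := by
          have := Submodule.add_mem (W i ⊔ W j)
            (Submodule.mem_sup_left hui) (Submodule.mem_sup_right hvj)
          simpa [sub_add_sub_cancel] using this
        exact hnz a c hac (triple0 i j l hl1 hl2 _ h1 hwl)
  -- hence all edges lie in the same part
  have hconst : ∀ (a b c d : Fin n) (hab : a ≠ b) (hcd : c ≠ d),
      ind a b hab = ind c d hcd := by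
    intro a b c d hab hcd
    by_cases h1 : a = c
    · subst h1
      by_cases h2 : b = d
      · subst h2; rfl
      · exact (hsymm a b hab).trans (hadj b a d hab.symm hcd h2)
    · by_cases h2 : a = d
      · subst h2
        by_cases h3 : b = c
        · subst h3
          exact hsymm a b hab
        · exact (hadj c a b hcd hab (Ne.symm h3)).symm
      · by_cases h3 : b = c
        · subst h3
          exact hadj a b d hab hcd h2
        · by_cases h4 : b = d
          · subst h4
            exact (hadj a b c hab (Ne.symm hcd) h1).trans (hsymm b c (Ne.symm hcd))
          · exact (hsymm a b hab).trans
              ((hadj b a c hab.symm h1 h3).trans (hadj a c d h1 hcd h2))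
  -- final contradiction
  set a0 : Fin n := ⟨0, by omega⟩ with ha0
  set a1 : Fin n := ⟨1, by omega⟩ with ha1
  have h01 : a0 ≠ a1 := by
    intro h
    have := congrArg Fin.val h
    simp [ha0, ha1] at this
  have hntk : Nontrivial (Fin k) := Fin.nontrivial_iff_two_le.mpr hk2
  obtain ⟨j, hj⟩ := exists_ne (ind a0 a1 h01)
  obtain ⟨H, hH⟩ := hne j
  have hHA : H ∈ 𝒜 := (hcover H).mpr ⟨j, hH⟩
  obtain ⟨p, hp, hpk⟩ := Finset.mem_image.mp hHA
  simp only [Finset.mem_filter, Finset.mem_univ, true_and] at hp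
  have hpne : p.1 ≠ p.2 := ne_of_lt hp
  have : j = ind p.1 p.2 hpne := huniq p.1 p.2 hpne j (by rw [hpk]; exact hH)
  rw [hconst p.1 p.2 a0 a1 hpne h01] at this
  exact hj this
end

section
/- Let 𝒜 = {H₁, …, Hₙ} be a central hyperplane arrangement in a finite-dimensional real vector space V, let m be a natural number, and let (i₁,…,iₙ) ∈ {1,…,m}ⁿ. Then the codimension in V^m of π_{i₁}^{−1}(H₁) ∩ ⋯ ∩ π_{iₙ}^{−1}(Hₙ) equals r(𝒜) if and only if the map s : 𝒜 → {1,…,m} defined by s(H_k) = i_k is constant on each connected component of the graph Γ(𝒜); equivalently, if and only if 𝒜 = ⨄_{j=1}^{m} s^{−1}(j), i.e. r(𝒜) = ∑_{j=1}^{m} r(s^{−1}(j)). -/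
open Set

open Module Submodule

section DualAux
variable {V : Type*} [AddCommGroup V] [Module ℝ V]

lemma dualCoann_span_image {ι : Type*} (g : ι → Module.Dual ℝ V) (T : Set ι) :
    (span ℝ (g '' T)).dualCoannihilator = ⨅ i ∈ T, LinearMap.ker (g i) := by
  ext x
  simp only [Submodule.mem_dualCoannihilator, Submodule.mem_iInf, LinearMap.mem_ker]
  constructor
  · intro h i hi
    exact h _ (Submodule.subset_span ⟨i, hi, rfl⟩)
  · intro h φ hφ
    have hle : span ℝ (g '' T) ≤ LinearMap.ker (LinearMap.flip (LinearMap.id (R := ℝ) (M := Module.Dual ℝ V)) x) := by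
      rw [Submodule.span_le]
      rintro ψ ⟨i, hi, rfl⟩
      simpa using h i hi
    simpa using hle hφ

variable [FiniteDimensional ℝ V]

lemma finrank_span_add_finrank_iInf_ker {ι : Type*} (g : ι → Module.Dual ℝ V) (T : Set ι) :
    finrank ℝ ↥(span ℝ (g '' T)) + finrank ℝ ↥(⨅ i ∈ T, LinearMap.ker (g i)) = finrank ℝ V := by
  rw [← dualCoann_span_image]
  exact Subspace.finrank_add_finrank_dualCoannihilator_eq _

lemma codim_iInf_ker {ι : Type*} (g : ι → Module.Dual ℝ V) (T : Set ι) :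
    finrank ℝ V - finrank ℝ ↥(⨅ i ∈ T, LinearMap.ker (g i)) = finrank ℝ ↥(span ℝ (g '' T)) := by
  have := finrank_span_add_finrank_iInf_ker g T
  omega
end DualAux


/-- Linear equivalence between a pi submodule and the product of the submodules. -/
noncomputable def piSubmoduleEquiv {m : ℕ} {V : Type*} [AddCommGroup V] [Module ℝ V]
    (W : Fin m → Submodule ℝ V) :
    ↥(Submodule.pi Set.univ W) ≃ₗ[ℝ] ((j : Fin m) → ↥(W j)) where
  toFun x j := ⟨x.1 j, x.2 j (Set.mem_univ j)⟩
  map_add' x y := rfl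
  map_smul' c x := rfl
  invFun y := ⟨fun j => (y j).1, fun j _ => (y j).2⟩
  left_inv x := rfl
  right_inv y := rfl

lemma finrank_pi_submodule {m : ℕ} {V : Type*} [AddCommGroup V] [Module ℝ V]
    [FiniteDimensional ℝ V] (W : Fin m → Submodule ℝ V) :
    finrank ℝ ↥(Submodule.pi Set.univ W) = ∑ j, finrank ℝ ↥(W j) := by
  rw [LinearEquiv.finrank_eq (piSubmoduleEquiv W)]
  exact Module.finrank_pi_fintype ℝ

lemma sum_codim_pi {m : ℕ} {V : Type*} [AddCommGroup V] [Module ℝ V]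
    [FiniteDimensional ℝ V] (W : Fin m → Submodule ℝ V) :
    finrank ℝ (Fin m → V) - finrank ℝ ↥(Submodule.pi Set.univ W)
      = ∑ j, (finrank ℝ V - finrank ℝ ↥(W j)) := by
  rw [finrank_pi_submodule, Module.finrank_pi_fintype ℝ (M := fun _ : Fin m => V)]
  rw [Finset.sum_tsub_distrib]
  exact fun j _ => Submodule.finrank_le (W j)


section Vec
variable {W : Type*} [AddCommGroup W] [Module ℝ W] {ι : Type*} [Fintype ι]

/-- A dependent index finset: supports a nontrivial linear relation. -/
def VDep (f : ι → W) (T : Finset ι) : Prop :=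
  ∃ c : ι → ℝ, (∀ i ∉ T, c i = 0) ∧ ∑ i, c i • f i = 0 ∧ c ≠ 0

/-- A circuit of indices: minimal dependent finset. -/
def VCircuit (f : ι → W) (T : Finset ι) : Prop :=
  VDep f T ∧ ∀ T' ⊆ T, VDep f T' → T' = T

lemma VDep.mono {f : ι → W} {T T' : Finset ι} (h : T ⊆ T') (hd : VDep f T) : VDep f T' := by
  obtain ⟨c, hc0, hrel, hne⟩ := hd
  exact ⟨c, fun i hi => hc0 i (fun hm => hi (h hm)), hrel, hne⟩

lemma sum_extend_of_zero_off {f : ι → W} {T : Finset ι} {c : ι → ℝ}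
    (hc0 : ∀ i ∉ T, c i = 0) : ∑ i, c i • f i = ∑ i : T, c i.1 • f i.1 := by
  rw [Finset.sum_coe_sort T (fun i => c i • f i)]
  exact (Finset.sum_subset (Finset.subset_univ T)
    (fun x _ hx => by rw [hc0 x hx, zero_smul])).symm

lemma exists_vcircuit {f : ι → W} {T : Finset ι} (h : VDep f T) :
    ∃ C ⊆ T, VCircuit f C := by
  classical
  induction T using Finset.strongInductionOn with
  | _ T ih =>
    by_cases hmin : ∀ T' ⊆ T, VDep f T' → T' = T
    · exact ⟨T, Finset.Subset.refl T, h, hmin⟩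
    · push_neg at hmin
      obtain ⟨T', hT'sub, hT'dep, hT'ne⟩ := hmin
      obtain ⟨C, hCsub, hC⟩ := ih T' (Finset.ssubset_iff_subset_ne.2 ⟨hT'sub, hT'ne⟩) hT'dep
      exact ⟨C, hCsub.trans hT'sub, hC⟩

lemma VCircuit.exists_full_support {f : ι → W} {T : Finset ι} (h : VCircuit f T) :
    ∃ c : ι → ℝ, (∀ i, c i ≠ 0 ↔ i ∈ T) ∧ ∑ i, c i • f i = 0 := by
  classical
  obtain ⟨⟨c, hc0, hrel, hne⟩, hmin⟩ := h
  have hsupp : (Finset.univ.filter (fun i => c i ≠ 0)) = T := by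
    apply hmin
    · intro i hi
      by_contra hiT
      exact absurd (hc0 i hiT) (by simpa using (Finset.mem_filter.1 hi).2)
    · exact ⟨c, fun i hi => by
        by_contra hci
        exact hi (Finset.mem_filter.2 ⟨Finset.mem_univ i, hci⟩), hrel, hne⟩
  refine ⟨c, fun i => ?_, hrel⟩
  rw [← hsupp]
  simp

lemma vdep_iff_not_linearIndependent {f : ι → W} {T : Finset ι} :
    VDep f T ↔ ¬ LinearIndependent ℝ (fun i : T => f i) := by
  classical
  rw [Fintype.linearIndependent_iff]
  constructor
  · rintro ⟨c, hc0, hrel, hne⟩ hLI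
    apply hne
    funext i
    by_cases hi : i ∈ T
    · have : ∑ x : T, c x.1 • f x.1 = 0 := by
        rw [← sum_extend_of_zero_off hc0, hrel]
      simpa using hLI (fun x => c x.1) this ⟨i, hi⟩
    · exact hc0 i hi
  · intro h
    push_neg at h
    obtain ⟨g, hrel, i0, hi0⟩ := h
    set c : ι → ℝ := fun i => if h : i ∈ T then g ⟨i, h⟩ else 0 with hc
    have hc0 : ∀ i ∉ T, c i = 0 := fun i hi => dif_neg hi
    refine ⟨c, hc0, ?_, ?_⟩
    · rw [sum_extend_of_zero_off hc0, ← hrel]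
      apply Finset.sum_congr rfl
      intro x _
      simp [hc, dif_pos x.2]
    · intro hzero
      apply hi0
      have := congrFun hzero i0.1
      simpa [hc, dif_pos i0.2] using this

lemma vdep_iff_rank {f : ι → W} {T : Finset ι} :
    VDep f T ↔ finrank ℝ ↥(span ℝ (f '' ↑T)) < T.card := by
  rw [vdep_iff_not_linearIndependent, linearIndependent_iff_card_eq_finrank_span]
  have h1 : Fintype.card {x // x ∈ T} = T.card := Fintype.card_coe T
  have h2 : Set.range (fun i : {x // x ∈ T} => f i.1) = f '' ↑T := by
    ext x
    simp
  have h3 := finrank_range_le_card (R := ℝ) (fun i : {x // x ∈ T} => f i.1)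
  simp only [Set.finrank] at h3 ⊢
  rw [h1, h2]
  rw [h2, h1] at h3
  omega
end Vec
section Core
variable {W : Type*} [AddCommGroup W] [Module ℝ W] {ι : Type*} [Fintype ι]
  {m : ℕ}

lemma mem_span_image_coeff {f : ι → W} {S : Finset ι} {u : W}
    (hu : u ∈ span ℝ (f '' ↑S)) :
    ∃ c : ι → ℝ, (∀ i ∉ S, c i = 0) ∧ ∑ i, c i • f i = u := by
  classical
  have h2 : f '' ↑S = Set.range (fun i : {x // x ∈ S} => f i.1) := by
    ext x; simp
  rw [h2, mem_span_range_iff_exists_fun] at hu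
  obtain ⟨g, hg⟩ := hu
  set c : ι → ℝ := fun i => if h : i ∈ S then g ⟨i, h⟩ else 0 with hcdef
  have hc0 : ∀ i ∉ S, c i = 0 := fun i hi => dif_neg hi
  refine ⟨c, hc0, ?_⟩
  rw [sum_extend_of_zero_off hc0, ← hg]
  apply Finset.sum_congr rfl
  intro x _
  simp [hcdef, dif_pos x.2]

lemma partsum_vanish_of_mono {f : ι → W} {s : ι → Fin m}
    (hmono : ∀ T, VCircuit f T → ∀ i ∈ T, ∀ i' ∈ T, s i = s i')
    (c : ι → ℝ) (hrel : ∑ i, c i • f i = 0) (j : Fin m) :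
    ∑ i ∈ Finset.univ.filter (fun i => s i = j), c i • f i = 0 := by
  classical
  suffices h : ∀ (n : ℕ) (c : ι → ℝ), (Finset.univ.filter (fun i => c i ≠ 0)).card ≤ n →
      ∑ i, c i • f i = 0 →
      ∀ j, ∑ i ∈ Finset.univ.filter (fun i => s i = j), c i • f i = 0 from
    h _ c le_rfl hrel j
  intro n
  induction n with
  | zero =>
    intro c hc _ j
    have hall : ∀ i, c i = 0 := by
      intro i
      by_contra h
      have : i ∈ Finset.univ.filter (fun i => c i ≠ 0) := by simp [h]
      have := Finset.card_pos.2 ⟨i, this⟩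
      omega
    exact Finset.sum_eq_zero fun i _ => by rw [hall i, zero_smul]
  | succ n ih =>
    intro c hc hrel j
    by_cases hzero : ∀ i, c i = 0
    · exact Finset.sum_eq_zero fun i _ => by rw [hzero i, zero_smul]
    push_neg at hzero
    obtain ⟨i1, hi1⟩ := hzero
    set S := Finset.univ.filter (fun i => c i ≠ 0) with hSdef
    have hdepS : VDep f S :=
      ⟨c, fun i hi => by simpa [hSdef] using hi, hrel, fun h => hi1 (congrFun h i1)⟩
    obtain ⟨T, hTS, hT⟩ := exists_vcircuit hdepS
    obtain ⟨d, hd, hdrel⟩ := hT.exists_full_support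
    have hTne : T.Nonempty := by
      rcases hT.1 with ⟨e, he0, herel, hene⟩
      obtain ⟨i2, hi2⟩ := Function.ne_iff.1 hene
      exact ⟨i2, by by_contra h; exact hi2 (he0 i2 h)⟩
    obtain ⟨i0, hi0T⟩ := hTne
    have hdi0 : d i0 ≠ 0 := (hd i0).2 hi0T
    have hdzero : ∀ i, i ∉ T → d i = 0 := by
      intro i hi
      by_contra h
      exact hi ((hd i).1 h)
    have hdpart : ∀ j', ∑ i ∈ Finset.univ.filter (fun i => s i = j'), d i • f i = 0 := by
      intro j'
      by_cases hj' : j' = s i0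
      · subst hj'
        rw [← hdrel]
        apply Finset.sum_subset (Finset.filter_subset _ _)
        intro i _ hi
        have : i ∉ T := by
          intro hiT
          exact hi (Finset.mem_filter.2 ⟨Finset.mem_univ i, hmono T hT i hiT i0 hi0T⟩)
        rw [hdzero i this, zero_smul]
      · apply Finset.sum_eq_zero
        intro i hi
        have hsi : s i = j' := (Finset.mem_filter.1 hi).2
        have : i ∉ T := fun hiT => hj' (hsi ▸ hmono T hT i hiT i0 hi0T)
        rw [hdzero i this, zero_smul]
    set q : ℝ := c i0 / d i0 with hq
    set c' : ι → ℝ := fun i => c i - q * d i with hc'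
    have hc'rel : ∑ i, c' i • f i = 0 := by
      have : ∀ i, c' i • f i = c i • f i - q • (d i • f i) := by
        intro i
        simp [hc', sub_smul, mul_smul]
      simp only [this, Finset.sum_sub_distrib, ← Finset.smul_sum, hrel, hdrel, smul_zero,
        sub_zero]
    have hc'i0 : c' i0 = 0 := by
      simp [hc', hq, div_mul_cancel₀ _ hdi0]
    have hsupp' : Finset.univ.filter (fun i => c' i ≠ 0) ⊆ S.erase i0 := by
      intro i hi
      have hne : c' i ≠ 0 := (Finset.mem_filter.1 hi).2
      refine Finset.mem_erase.2 ⟨fun h => hne (h ▸ hc'i0), ?_⟩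
      by_contra hiS
      have hci : c i = 0 := by
        by_contra h
        exact hiS (Finset.mem_filter.2 ⟨Finset.mem_univ i, h⟩)
      have hdi : d i = 0 := hdzero i (fun hiT => hiS (hTS hiT))
      exact hne (by simp [hc', hci, hdi])
    have hi0S : i0 ∈ S := hTS hi0T
    have hcard : (Finset.univ.filter (fun i => c' i ≠ 0)).card ≤ n := by
      have h1 := Finset.card_le_card hsupp'
      have h2 := Finset.card_erase_of_mem hi0S
      have h3 := Finset.card_pos.2 ⟨i0, hi0S⟩
      omega
    have hih := ih c' hcard hc'rel
    have key : ∀ j', ∑ i ∈ Finset.univ.filter (fun i => s i = j'), c i • f i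
        = (∑ i ∈ Finset.univ.filter (fun i => s i = j'), c' i • f i)
          + q • (∑ i ∈ Finset.univ.filter (fun i => s i = j'), d i • f i) := by
      intro j'
      rw [Finset.smul_sum, ← Finset.sum_add_distrib]
      apply Finset.sum_congr rfl
      intro i _
      simp [hc', sub_smul, mul_smul]
    rw [key j, hih j, hdpart j, smul_zero, add_zero]

lemma ind_of_mono {f : ι → W} {s : ι → Fin m}
    (hmono : ∀ T, VCircuit f T → ∀ i ∈ T, ∀ i' ∈ T, s i = s i') :
    ∀ u : Fin m → W,
      (∀ j, u j ∈ span ℝ (f '' ↑(Finset.univ.filter (fun i => s i = j)))) →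
      ∑ j, u j = 0 → ∀ j, u j = 0 := by
  classical
  intro u hu hsum j
  choose cc hcc0 hccsum using fun j => mem_span_image_coeff (hu j)
  set c : ι → ℝ := fun i => cc (s i) i with hcdef
  have hrel : ∑ i, c i • f i = 0 := by
    rw [← Finset.sum_fiberwise Finset.univ s (fun i => c i • f i)]
    rw [← hsum]
    apply Finset.sum_congr rfl
    intro j' _
    rw [← hccsum j']
    rw [← Finset.sum_subset (Finset.filter_subset (fun i => s i = j') Finset.univ)
      (fun i _ hi => by
        rw [hcc0 j' i (by simpa using hi), zero_smul])]
    apply Finset.sum_congr rfl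
    intro i hi
    have : s i = j' := (Finset.mem_filter.1 hi).2
    simp [hcdef, this]
  have := partsum_vanish_of_mono hmono c hrel j
  rw [← hccsum j, ← Finset.sum_subset (Finset.filter_subset (fun i => s i = j) Finset.univ)
      (fun i _ hi => by rw [hcc0 j i (by simpa using hi), zero_smul])]
  rw [← this]
  apply Finset.sum_congr rfl
  intro i hi
  have hsi : s i = j := (Finset.mem_filter.1 hi).2
  simp [hcdef, hsi]

lemma mono_of_ind {f : ι → W} {s : ι → Fin m}
    (hind : ∀ u : Fin m → W,
      (∀ j, u j ∈ span ℝ (f '' ↑(Finset.univ.filter (fun i => s i = j)))) →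
      ∑ j, u j = 0 → ∀ j, u j = 0) :
    ∀ T, VCircuit f T → ∀ i ∈ T, ∀ i' ∈ T, s i = s i' := by
  classical
  intro T hT i hiT i' hi'T
  by_contra hne
  obtain ⟨d, hd, hdrel⟩ := hT.exists_full_support
  have hdzero : ∀ k, k ∉ T → d k = 0 := fun k hk => by
    by_contra h; exact hk ((hd k).1 h)
  set u : Fin m → W := fun j => ∑ k ∈ Finset.univ.filter (fun k => s k = j), d k • f k
    with hudef
  have hu : ∀ j, u j ∈ span ℝ (f '' ↑(Finset.univ.filter (fun i => s i = j))) := by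
    intro j
    apply Submodule.sum_mem
    intro k hk
    exact Submodule.smul_mem _ _ (Submodule.subset_span ⟨k, by simpa using hk, rfl⟩)
  have hsum : ∑ j, u j = 0 := by
    rw [hudef]
    rw [Finset.sum_fiberwise Finset.univ s (fun k => d k • f k)]
    exact hdrel
  have huj := hind u hu hsum (s i)
  -- build a relation supported on T' := T.filter (s · = s i)
  set c'' : ι → ℝ := fun k => if s k = s i then d k else 0 with hc''
  have hT' : Finset.univ.filter (fun k => c'' k ≠ 0) ⊆ T.filter (fun k => s k = s i) := by
    intro k hk
    have h1 : c'' k ≠ 0 := (Finset.mem_filter.1 hk).2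
    have h2 : s k = s i := by
      by_contra h
      exact h1 (by simp [hc'', h])
    have h3 : d k ≠ 0 := by
      intro h
      exact h1 (by simp [hc'', h])
    exact Finset.mem_filter.2 ⟨(hd k).1 h3, h2⟩
  have hdep : VDep f (T.filter (fun k => s k = s i)) := by
    refine ⟨c'', fun k hk => ?_, ?_, ?_⟩
    · by_contra h
      exact hk (hT' (Finset.mem_filter.2 ⟨Finset.mem_univ k, h⟩))
    · have : ∀ k, c'' k • f k = if s k = s i then d k • f k else 0 := by
        intro k
        by_cases h : s k = s i <;> simp [hc'', h]
      rw [Finset.sum_congr rfl (fun k _ => this k), ← Finset.sum_filter]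
      exact huj
    · intro h
      have := congrFun h i
      simp [hc''] at this
      exact (hd i).2 hiT this
  have heq := hT.2 _ (Finset.filter_subset _ _) hdep
  have : i' ∈ T.filter (fun k => s k = s i) := heq.symm ▸ hi'T
  exact hne ((Finset.mem_filter.1 this).2).symm
end Core


section Sup
variable {W : Type*} [AddCommGroup W] [Module ℝ W] {κ : Type*} [Fintype κ] [DecidableEq κ]

lemma mem_finsetSup_decompose (U : κ → Submodule ℝ W) (J : Finset κ) {x : W}
    (hx : x ∈ J.sup U) :
    ∃ u : κ → W, (∀ k, u k ∈ U k) ∧ (∀ k ∉ J, u k = 0) ∧ x = ∑ k ∈ J, u k := by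
  induction J using Finset.induction generalizing x with
  | empty =>
    refine ⟨0, fun k => zero_mem _, fun k _ => rfl, ?_⟩
    simpa using hx
  | insert a J ha ih =>
    rw [Finset.sup_insert, Submodule.mem_sup] at hx
    obtain ⟨y, hy, z, hz, rfl⟩ := hx
    obtain ⟨u, hu1, hu2, hu3⟩ := ih hz
    refine ⟨Function.update u a y, ?_, ?_, ?_⟩
    · intro k
      rcases eq_or_ne k a with rfl | hk
      · simpa using hy
      · simpa [Function.update_of_ne hk] using hu1 k
    · intro k hk
      have hka : k ≠ a := fun h => hk (h ▸ Finset.mem_insert_self a J)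
      have hkJ : k ∉ J := fun h => hk (Finset.mem_insert_of_mem h)
      simp [Function.update_of_ne hka, hu2 k hkJ]
    · rw [Finset.sum_insert ha, Function.update_self]
      congr 1
      rw [hu3]
      exact (Finset.sum_congr rfl fun k hk =>
        Function.update_of_ne (ne_of_mem_of_not_mem hk ha) _ _).symm

variable [FiniteDimensional ℝ W]

lemma finrank_finsetSup_le (U : κ → Submodule ℝ W) (J : Finset κ) :
    finrank ℝ ↥(J.sup U) ≤ ∑ k ∈ J, finrank ℝ ↥(U k) := by
  induction J using Finset.induction with
  | empty => simp
  | insert a J ha ih =>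
    rw [Finset.sup_insert, Finset.sum_insert ha]
    have := finrank_sup_add_finrank_inf_eq (U a) (J.sup U)
    omega

lemma finrank_sup_eq_sum_of_ind (U : κ → Submodule ℝ W)
    (hind : ∀ u : κ → W, (∀ k, u k ∈ U k) → ∑ k, u k = 0 → ∀ k, u k = 0)
    (J : Finset κ) :
    finrank ℝ ↥(J.sup U) = ∑ k ∈ J, finrank ℝ ↥(U k) := by
  induction J using Finset.induction with
  | empty => simp
  | insert a J ha ih =>
    have hdisj : U a ⊓ J.sup U = ⊥ := by
      rw [eq_bot_iff]
      rintro x ⟨hxa, hxJ⟩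
      obtain ⟨u, hu1, hu2, hu3⟩ := mem_finsetSup_decompose U J hxJ
      set w : κ → W := Function.update u a (-x) with hw
      have hww : ∀ k, w k ∈ U k := by
        intro k
        rcases eq_or_ne k a with rfl | hk
        · simpa [hw] using neg_mem hxa
        · simpa [hw, Function.update_of_ne hk] using hu1 k
      have hsum : ∑ k, w k = 0 := by
        rw [← Finset.add_sum_erase _ w (Finset.mem_univ a)]
        have h1 : ∑ k ∈ Finset.univ.erase a, w k = ∑ k ∈ J, u k := by
          rw [← Finset.sum_subset (fun k hk => Finset.mem_erase.2
            ⟨ne_of_mem_of_not_mem hk ha, Finset.mem_univ k⟩)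
            (fun k _ hk => by
              rcases eq_or_ne k a with rfl | hka
              · exact absurd (Finset.mem_erase.1 ‹k ∈ Finset.univ.erase k›).1 (by simp)
              · simp [hw, Function.update_of_ne hka, hu2 k hk])]
          exact Finset.sum_congr rfl fun k hk =>
            Function.update_of_ne (ne_of_mem_of_not_mem hk ha) _ _
        rw [h1, ← hu3]
        simp [hw]
      have := hind w hww hsum a
      simp [hw] at this
      simpa [this] using Submodule.zero_mem ⊥
    rw [Finset.sup_insert, Finset.sum_insert ha, ← ih]
    have h3 := finrank_sup_add_finrank_inf_eq (U a) (J.sup U)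
    rw [hdisj] at h3
    simp only [finrank_bot, add_zero] at h3
    omega

lemma ind_of_finrank_sup_eq_sum (U : κ → Submodule ℝ W)
    (heq : finrank ℝ ↥(Finset.univ.sup U) = ∑ k, finrank ℝ ↥(U k)) :
    ∀ u : κ → W, (∀ k, u k ∈ U k) → ∑ k, u k = 0 → ∀ k, u k = 0 := by
  intro u hu hsum j
  by_contra hne
  set R := (Finset.univ.erase j).sup U with hR
  have hxR : u j ∈ R := by
    have huj : u j = -∑ k ∈ Finset.univ.erase j, u k := by
      have h := Finset.add_sum_erase Finset.univ u (Finset.mem_univ j)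
      rw [hsum] at h
      exact eq_neg_of_add_eq_zero_left h
    rw [huj]
    exact neg_mem (Submodule.sum_mem _ fun k hk =>
      (Finset.le_sup hk : U k ≤ R) (hu k))
  have hinf : u j ∈ U j ⊓ R := ⟨hu j, hxR⟩
  have h1 : 0 < finrank ℝ ↥(U j ⊓ R) := by
    rw [Nat.pos_iff_ne_zero, Ne, Submodule.finrank_eq_zero]
    intro h
    rw [h] at hinf
    exact hne (by simpa using hinf)
  have h2 : Finset.univ.sup U = U j ⊔ R := by
    rw [hR, ← Finset.sup_insert, Finset.insert_erase (Finset.mem_univ j)]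
  have h3 := finrank_sup_add_finrank_inf_eq (U j) R
  have h4 := finrank_finsetSup_le U (Finset.univ.erase j)
  rw [← hR] at h4
  have h5 : ∑ k, finrank ℝ ↥(U k)
      = finrank ℝ ↥(U j) + ∑ k ∈ Finset.univ.erase j, finrank ℝ ↥(U k) :=
    (Finset.add_sum_erase _ _ (Finset.mem_univ j)).symm
  rw [h2] at heq
  omega
end Sup

section Bridge
variable {V : Type*} [NormedAddCommGroup V] [NormedSpace ℝ V] [FiniteDimensional ℝ V] [DecidableEq (Submodule ℝ V)]
  {𝒜 : Finset (Submodule ℝ V)} {f : {H // H ∈ 𝒜} → Module.Dual ℝ V}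
  (hfker : ∀ i, LinearMap.ker (f i) = i.1)

include hfker in
lemma inf_image_val (T : Finset {H // H ∈ 𝒜}) :
    (T.image Subtype.val).inf id = ⨅ i ∈ (↑T : Set {H // H ∈ 𝒜}), LinearMap.ker (f i) := by
  classical
  rw [Finset.inf_image, Finset.inf_eq_iInf]
  apply le_antisymm
  · simp only [le_iInf_iff]
    intro i hi
    rw [hfker i]
    exact iInf_le_of_le i (by simp [Finset.mem_coe.1 hi])
  · simp only [le_iInf_iff]
    intro i hi
    have hid : (id ∘ Subtype.val) i = LinearMap.ker (f i) := by simp [hfker i]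
    rw [hid]
    exact iInf_le_of_le i (by simp [hi])

include hfker in
lemma arrRank_image_val (T : Finset {H // H ∈ 𝒜}) :
    arrRank (T.image Subtype.val) = finrank ℝ ↥(span ℝ (f '' ↑T)) := by
  rw [arrRank, inf_image_val hfker, codim_iInf_ker]

include hfker in
lemma dependent_image_val_iff (T : Finset {H // H ∈ 𝒜}) :
    Dependent (T.image Subtype.val) ↔ VDep f T := by
  classical
  rw [Dependent, arrRank_image_val hfker,
    Finset.card_image_of_injective T Subtype.val_injective, vdep_iff_rank]

include hfker in
lemma isCircuit_image_val_iff (T : Finset {H // H ∈ 𝒜}) :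
    IsCircuit (T.image Subtype.val) ↔ VCircuit f T := by
  classical
  constructor
  · rintro ⟨hdep, hmin⟩
    refine ⟨(dependent_image_val_iff hfker T).1 hdep, ?_⟩
    intro T' hT'sub hT'dep
    have h1 : T'.image Subtype.val = T.image Subtype.val :=
      hmin _ (Finset.image_subset_image hT'sub) ((dependent_image_val_iff hfker T').2 hT'dep)
    apply Finset.Subset.antisymm hT'sub
    intro i hi
    have : i.1 ∈ T'.image Subtype.val := h1 ▸ Finset.mem_image_of_mem _ hi
    obtain ⟨i', hi', hii'⟩ := Finset.mem_image.1 this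
    exact (Subtype.ext hii' : i' = i) ▸ hi'
  · rintro ⟨hdep, hmin⟩
    refine ⟨(dependent_image_val_iff hfker T).2 hdep, ?_⟩
    intro ℬ' hsub hdep'
    set T' : Finset {H // H ∈ 𝒜} := T.filter (fun i => i.1 ∈ ℬ') with hT'
    have himg : T'.image Subtype.val = ℬ' := by
      apply Finset.Subset.antisymm
      · intro H hH
        obtain ⟨i, hi, rfl⟩ := Finset.mem_image.1 hH
        exact (Finset.mem_filter.1 hi).2
      · intro H hH
        obtain ⟨i, hi, rfl⟩ := Finset.mem_image.1 (hsub hH)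
        exact Finset.mem_image_of_mem _ (Finset.mem_filter.2 ⟨hi, hH⟩)
    have : T' = T := hmin T' (Finset.filter_subset _ _)
      ((dependent_image_val_iff hfker T').1 (himg ▸ hdep'))
    rw [← himg, this]

include hfker in
lemma reach_iff_mono {m : ℕ} (s : {H // H ∈ 𝒜} → Fin m) :
    (∀ H H' : {H // H ∈ 𝒜}, (circuitGraph 𝒜).Reachable H H' → s H = s H') ↔
    (∀ T, VCircuit f T → ∀ i ∈ T, ∀ i' ∈ T, s i = s i') := by
  constructor
  · intro h T hT i hiT i' hi'T
    rcases eq_or_ne i i' with rfl | hne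
    · rfl
    apply h
    apply SimpleGraph.Adj.reachable
    refine ⟨hne, T.image Subtype.val, ?_, (isCircuit_image_val_iff hfker T).2 hT,
      Finset.mem_image_of_mem _ hiT, Finset.mem_image_of_mem _ hi'T⟩
    intro H hH
    obtain ⟨i'', hi'', rfl⟩ := Finset.mem_image.1 hH
    exact i''.2
  · intro h H H' hreach
    classical
    obtain ⟨w⟩ := hreach
    induction w with
    | nil => rfl
    | cons hadj p ih =>
      rename_i a b c
      obtain ⟨hne, ℬ, hsub, hcirc, haℬ, hbℬ⟩ := hadj
      set T : Finset {H // H ∈ 𝒜} := 𝒜.attach.filter (fun i => i.1 ∈ ℬ) with hT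
      have himg : T.image Subtype.val = ℬ := by
        apply Finset.Subset.antisymm
        · intro H hH
          obtain ⟨i, hi, rfl⟩ := Finset.mem_image.1 hH
          exact (Finset.mem_filter.1 hi).2
        · intro H hH
          exact Finset.mem_image.2 ⟨⟨H, hsub hH⟩,
            Finset.mem_filter.2 ⟨Finset.mem_attach _ _, hH⟩, rfl⟩
      have hvc : VCircuit f T := (isCircuit_image_val_iff hfker T).1 (himg ▸ hcirc)
      have hab : s a = s b := h T hvc a
        (Finset.mem_filter.2 ⟨Finset.mem_attach _ _, haℬ⟩) b
        (Finset.mem_filter.2 ⟨Finset.mem_attach _ _, hbℬ⟩)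
      exact hab.trans ih
end Bridge

/-- For an assignment `s : 𝒜 → {1,…,m}`, the codimension in `V^m` of
`⋂_{H ∈ 𝒜} π_{s(H)}⁻¹(H)` equals `r(𝒜)` if and only if `s` is constant on each
connected component of the graph `Γ(𝒜)`, if and only if
`r(𝒜) = ∑_{j=1}^m r(s⁻¹(j))`. -/
theorem codim_eq_rank_iff
    {V : Type*} [NormedAddCommGroup V] [NormedSpace ℝ V] [FiniteDimensional ℝ V]
    (𝒜 : Finset (Submodule ℝ V)) (h𝒜 : IsCentralArrangement 𝒜) (m : ℕ)
    (s : {H // H ∈ 𝒜} → Fin m) :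
    ((Module.finrank ℝ (Fin m → V) -
        Module.finrank ℝ
          ↥(⨅ H : {H // H ∈ 𝒜},
              Submodule.comap (LinearMap.proj (s H) : (Fin m → V) →ₗ[ℝ] V) H.1)
        = arrRank 𝒜)
      ↔ ∀ H H' : {H // H ∈ 𝒜}, (circuitGraph 𝒜).Reachable H H' → s H = s H') ∧
    ((Module.finrank ℝ (Fin m → V) -
        Module.finrank ℝ
          ↥(⨅ H : {H // H ∈ 𝒜},
              Submodule.comap (LinearMap.proj (s H) : (Fin m → V) →ₗ[ℝ] V) H.1)
        = arrRank 𝒜)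
      ↔ arrRank 𝒜 =
          ∑ j : Fin m,
            (Module.finrank ℝ V -
              Module.finrank ℝ ↥(⨅ (H : {H // H ∈ 𝒜}) (_ : s H = j), H.1))) := by
  classical
  choose f hf0 hfker using fun (i : {H // H ∈ 𝒜}) => h𝒜 i.1 i.2
  set U : Fin m → Submodule ℝ (Module.Dual ℝ V) :=
    fun j => span ℝ (f '' ↑(Finset.univ.filter (fun i => s i = j))) with hUdef
  set Wj : Fin m → Submodule ℝ V :=
    fun j => ⨅ (H : {H // H ∈ 𝒜}) (_ : s H = j), H.1 with hWdef
  -- The statement's per-coordinate subspaces agree with iInf over the fiber finsets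
  have hWker : ∀ j, Wj j = ⨅ i ∈ (↑(Finset.univ.filter (fun i => s i = j)) :
      Set {H // H ∈ 𝒜}), LinearMap.ker (f i) := by
    intro j
    apply le_antisymm
    · simp only [le_iInf_iff]
      intro i hi
      rw [hfker i]
      exact iInf_le_of_le i (iInf_le_of_le (by simpa using hi) le_rfl)
    · simp only [hWdef, le_iInf_iff]
      intro i hi
      rw [← hfker i]
      exact iInf_le_of_le i (iInf_le_of_le (by simp [hi]) le_rfl)
  have hWU : ∀ j, finrank ℝ V - finrank ℝ ↥(Wj j) = finrank ℝ ↥(U j) := by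
    intro j
    rw [hWker j]
    exact codim_iInf_ker f _
  -- the big intersection is a product
  have hpi : (⨅ H : {H // H ∈ 𝒜},
      Submodule.comap (LinearMap.proj (s H) : (Fin m → V) →ₗ[ℝ] V) H.1)
      = Submodule.pi Set.univ Wj := by
    ext x
    simp only [Submodule.mem_iInf, Submodule.mem_comap, LinearMap.proj_apply,
      Submodule.mem_pi, Set.mem_univ, forall_true_left, hWdef]
    constructor
    · intro h j i hij
      exact hij ▸ h i
    · intro h i
      exact h (s i) i rfl
  have hcodim : finrank ℝ (Fin m → V) -
      finrank ℝ ↥(⨅ H : {H // H ∈ 𝒜},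
        Submodule.comap (LinearMap.proj (s H) : (Fin m → V) →ₗ[ℝ] V) H.1)
      = ∑ j, (finrank ℝ V - finrank ℝ ↥(Wj j)) := by
    rw [hpi]
    exact sum_codim_pi Wj
  -- the rank of the arrangement is the rank of the sup span
  have hattach : (Finset.univ : Finset {H // H ∈ 𝒜}).image Subtype.val = 𝒜 := by
    rw [← Finset.attach_eq_univ, Finset.attach_image_val]
  have hsup : Finset.univ.sup U = span ℝ (f '' ↑(Finset.univ : Finset {H // H ∈ 𝒜})) := by
    have hcover : (⋃ j, (↑(Finset.univ.filter (fun i => s i = j)) :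
        Set {H // H ∈ 𝒜})) = (↑(Finset.univ : Finset {H // H ∈ 𝒜}) : Set _) := by
      ext i
      simp only [Set.mem_iUnion, Finset.coe_filter, Set.mem_setOf_eq, Finset.mem_univ,
        true_and, Finset.coe_univ, Set.mem_univ, iff_true]
      exact ⟨s i, rfl⟩
    rw [Finset.sup_univ_eq_iSup, hUdef, ← Submodule.span_iUnion, ← Set.image_iUnion, hcover]
  have hrank : arrRank 𝒜 = finrank ℝ ↥(Finset.univ.sup U) := by
    rw [hsup, ← arrRank_image_val hfker, hattach]
  -- main equivalence
  have hmain : (∑ j, (finrank ℝ V - finrank ℝ ↥(Wj j)) = arrRank 𝒜) ↔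
      (∀ H H' : {H // H ∈ 𝒜}, (circuitGraph 𝒜).Reachable H H' → s H = s H') := by
    rw [Finset.sum_congr rfl (fun j _ => hWU j), hrank, reach_iff_mono hfker s]
    constructor
    · intro h
      exact mono_of_ind (ind_of_finrank_sup_eq_sum U h.symm)
    · intro h
      exact (finrank_sup_eq_sum_of_ind U (ind_of_mono h) Finset.univ).symm
  constructor
  · rw [hcodim]
    exact hmain
  · rw [hcodim]
    exact eq_comm
end

section
/- Let 𝒜 be a central hyperplane arrangement in a finite-dimensional real vector space V, let m, l be natural numbers, and let f : Ch(𝒜)^m → Ch(𝒜)^l be a map satisfying IIA. If T ⊆ Ch(𝒜)^m is a subset such that some H ∈ 𝒜 does not separate T, then some H′ ∈ 𝒜 does not separate the image f(T) ⊆ Ch(𝒜)^l. Consequently f induces a simplicial map from the simplicial complex M_m(𝒜) to M_l(𝒜). -/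
open Set

/-- A map `f : Ch(𝒜)^m → Ch(𝒜)^l` satisfying IIA maps simplices of `M_m(𝒜)` to
simplices of `M_l(𝒜)`: if some `H ∈ 𝒜` does not separate `T`, then some
`H' ∈ 𝒜` does not separate the image `f(T)`.  Consequently `f` induces a
simplicial map `M_m(𝒜) → M_l(𝒜)`. -/
theorem IIA_induces_simplicial_map
    {V : Type*} [NormedAddCommGroup V] [NormedSpace ℝ V] [FiniteDimensional ℝ V]
    (𝒜 : Finset (Submodule ℝ V)) (h𝒜 : IsCentralArrangement 𝒜) (m l : ℕ)
    (f : (Fin m → Chamber 𝒜) → (Fin l → Chamber 𝒜)) (hf : SatisfiesIIA f)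
    (T : Set (Fin m → Chamber 𝒜))
    (hT : ∃ (H : Submodule ℝ V) (hH : H ∈ 𝒜), ¬ SeparationOf H hH T) :
    ∃ (H' : Submodule ℝ V) (hH' : H' ∈ 𝒜), ¬ SeparationOf H' hH' (f '' T) := by
  obtain ⟨H, hH, hsep⟩ := hT
  refine ⟨H, hH, ?_⟩
  rintro ⟨s₁, ⟨t₁, ht₁, rfl⟩, s₂, ⟨t₂, ht₂, rfl⟩, hne⟩
  obtain ⟨φ, hφ⟩ := hf H hH
  have heq : (fun i => epsC H hH (t₁ i)) = (fun i => epsC H hH (t₂ i)) := by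
    by_contra h
    exact hsep ⟨t₁, ht₁, t₂, ht₂, h⟩
  apply hne
  rw [← hφ t₁, ← hφ t₂, heq]
end

section
/- Let 𝒜 be a central hyperplane arrangement in a finite-dimensional real vector space V and let f : Ch(𝒜) → Ch(𝒜) be a map satisfying IIA, with associated maps φ_H : Ch({H}) → Ch({H}) for H ∈ 𝒜. Then f is bijective if and only if for every H ∈ 𝒜 the map φ_H is either the identity of Ch({H}) or the transposition exchanging the two elements of Ch({H}). -/
open Set

section Aux

variable {V : Type*} [NormedAddCommGroup V] [NormedSpace ℝ V] [FiniteDimensional ℝ V]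

lemma Chamber.eq_comp {𝒜 : Finset (Submodule ℝ V)} (c : Chamber 𝒜) :
    c.1 = connectedComponentIn (arrComplement 𝒜) c.pt := c.2.choose_spec.2

lemma sign_const (g : V →ₗ[ℝ] ℝ) {s : Set V} (hs : IsPreconnected s)
    (hne : ∀ z ∈ s, g z ≠ 0) {x y : V} (hx : x ∈ s) (hy : y ∈ s) :
    (0 < g x ↔ 0 < g y) := by
  have hcont : Continuous g := g.continuous_of_finiteDimensional
  have key : ∀ a b : V, a ∈ s → b ∈ s → 0 < g a → 0 < g b := by
    intro a b ha hb hga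
    by_contra hgb
    have hgb' : g b < 0 := lt_of_le_of_ne (not_lt.1 hgb) (hne b hb)
    have := hs.intermediate_value hb ha hcont.continuousOn
    have h0 : (0 : ℝ) ∈ Icc (g b) (g a) := ⟨hgb'.le, hga.le⟩
    obtain ⟨z, hz, hz0⟩ := this h0
    exact hne z hz hz0
  exact ⟨fun h => key x y hx hy h, fun h => key y x hy hx h⟩

lemma arrComplement_singleton (H : Submodule ℝ V) (g : V →ₗ[ℝ] ℝ)
    (hker : LinearMap.ker g = H) :
    arrComplement ({H} : Finset (Submodule ℝ V)) = {z | g z ≠ 0} := by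
  ext z
  simp only [arrComplement, Finset.mem_singleton, mem_setOf_eq, forall_eq]
  rw [← hker]
  simp [LinearMap.mem_ker]

lemma comp_eq_halfspace (g : V →ₗ[ℝ] ℝ) {x : V} (hx : 0 < g x) :
    connectedComponentIn {z | g z ≠ 0} x = {z | 0 < g z} := by
  apply Set.Subset.antisymm
  · intro z hz
    have hsub := connectedComponentIn_subset {z | g z ≠ 0} x
    have hmem : x ∈ connectedComponentIn {z | g z ≠ 0} x :=
      mem_connectedComponentIn (ne_of_gt hx)
    exact (sign_const g isPreconnected_connectedComponentIn
      (fun w hw => hsub hw) hmem hz).1 hx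
  · exact (convex_halfSpace_gt g.isLinear 0).isPreconnected.subset_connectedComponentIn
      hx (fun z hz => ne_of_gt hz)

lemma comp_eq_halfspace_neg (g : V →ₗ[ℝ] ℝ) {x : V} (hx : g x < 0) :
    connectedComponentIn {z | g z ≠ 0} x = {z | g z < 0} := by
  have h1 : ({z | g z ≠ 0} : Set V) = {z | (-g) z ≠ 0} := by
    ext z; simp
  have h2 : (0:ℝ) < (-g) x := by simpa using hx
  rw [h1, comp_eq_halfspace (-g) h2]
  ext z; simp

lemma segment_subset_complement {𝒜 : Finset (Submodule ℝ V)}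
    (h𝒜 : IsCentralArrangement 𝒜) {p q : V}
    (hp : p ∈ arrComplement 𝒜) (hq : q ∈ arrComplement 𝒜)
    (h : ∀ H, H ∈ 𝒜 → ∃ g : V →ₗ[ℝ] ℝ, LinearMap.ker g = H ∧ (0 < g p ↔ 0 < g q)) :
    segment ℝ p q ⊆ arrComplement 𝒜 := by
  intro z hz H hH
  obtain ⟨g, hker, hiff⟩ := h H hH
  have hpne : g p ≠ 0 := fun h0 => hp H hH (hker ▸ LinearMap.mem_ker.2 h0)
  have hqne : g q ≠ 0 := fun h0 => hq H hH (hker ▸ LinearMap.mem_ker.2 h0)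
  rw [← hker, LinearMap.mem_ker]
  rcases lt_or_gt_of_ne hpne with hneg | hpos
  · have hqneg : g q < 0 :=
      lt_of_le_of_ne (not_lt.1 fun hq' => absurd (hiff.2 hq') (not_lt.2 hneg.le)) hqne
    have := (convex_halfSpace_lt g.isLinear 0).segment_subset hneg hqneg hz
    exact ne_of_lt this
  · have hqpos : 0 < g q := hiff.1 hpos
    have := (convex_halfSpace_gt g.isLinear 0).segment_subset hpos hqpos hz
    exact ne_of_gt this

lemma chamber_eq_of_signs {𝒜 : Finset (Submodule ℝ V)}
    (h𝒜 : IsCentralArrangement 𝒜) (c c' : Chamber 𝒜)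
    (h : ∀ H, H ∈ 𝒜 → ∃ g : V →ₗ[ℝ] ℝ, LinearMap.ker g = H ∧
        (0 < g c.pt ↔ 0 < g c'.pt)) : c = c' := by
  have hseg := segment_subset_complement h𝒜 c.pt_mem c'.pt_mem h
  have hpre : IsPreconnected (segment ℝ c.pt c'.pt) :=
    (convex_segment _ _).isPreconnected
  have hsub : segment ℝ c.pt c'.pt ⊆ connectedComponentIn (arrComplement 𝒜) c.pt :=
    hpre.subset_connectedComponentIn (left_mem_segment ℝ _ _) hseg
  have : c'.pt ∈ connectedComponentIn (arrComplement 𝒜) c.pt :=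
    hsub (right_mem_segment ℝ _ _)
  have := connectedComponentIn_eq this
  exact Subtype.ext (by rw [Chamber.eq_comp c, Chamber.eq_comp c', this])

end Aux

section Aux2

variable {V : Type*} [NormedAddCommGroup V] [NormedSpace ℝ V] [FiniteDimensional ℝ V]

lemma epsC_val {𝒜 : Finset (Submodule ℝ V)} (H : Submodule ℝ V) (hH : H ∈ 𝒜)
    (g : V →ₗ[ℝ] ℝ) (hker : LinearMap.ker g = H) (c : Chamber 𝒜) :
    (epsC H hH c).1 = connectedComponentIn {z | g z ≠ 0} c.pt := by
  rw [show (epsC H hH c).1 =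
      connectedComponentIn (arrComplement ({H} : Finset (Submodule ℝ V))) c.pt from rfl,
    arrComplement_singleton H g hker]

lemma pt_not_ker {𝒜 : Finset (Submodule ℝ V)} (H : Submodule ℝ V) (hH : H ∈ 𝒜)
    (g : V →ₗ[ℝ] ℝ) (hker : LinearMap.ker g = H) (c : Chamber 𝒜) : g c.pt ≠ 0 :=
  fun h0 => c.pt_mem H hH (hker ▸ LinearMap.mem_ker.2 h0)

lemma epsC_eq_iff {𝒜 : Finset (Submodule ℝ V)} (H : Submodule ℝ V) (hH : H ∈ 𝒜)
    (g : V →ₗ[ℝ] ℝ) (hker : LinearMap.ker g = H) (c c' : Chamber 𝒜) :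
    epsC H hH c = epsC H hH c' ↔ (0 < g c.pt ↔ 0 < g c'.pt) := by
  have hcne := pt_not_ker H hH g hker c
  have hc'ne := pt_not_ker H hH g hker c'
  constructor
  · intro hEq
    have hsets : connectedComponentIn {z | g z ≠ 0} c.pt
        = connectedComponentIn {z | g z ≠ 0} c'.pt := by
      rw [← epsC_val H hH g hker c, ← epsC_val H hH g hker c', hEq]
    have hc'mem : c'.pt ∈ connectedComponentIn {z | g z ≠ 0} c.pt := by
      rw [hsets]; exact mem_connectedComponentIn hc'ne
    exact sign_const g isPreconnected_connectedComponentIn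
      (fun w hw => connectedComponentIn_subset _ _ hw)
      (mem_connectedComponentIn hcne) hc'mem
  · intro hiff
    apply Subtype.ext
    rw [epsC_val H hH g hker c, epsC_val H hH g hker c']
    rcases lt_or_gt_of_ne hcne with hneg | hpos
    · have hneg' : g c'.pt < 0 :=
        lt_of_le_of_ne (not_lt.1 fun h => absurd (hiff.2 h) (not_lt.2 hneg.le)) hc'ne
      rw [comp_eq_halfspace_neg g hneg, comp_eq_halfspace_neg g hneg']
    · rw [comp_eq_halfspace g hpos, comp_eq_halfspace g (hiff.1 hpos)]

noncomputable def mkChamber {𝒜 : Finset (Submodule ℝ V)} (x : V)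
    (hx : x ∈ arrComplement 𝒜) : Chamber 𝒜 :=
  ⟨connectedComponentIn (arrComplement 𝒜) x, x, hx, rfl⟩

lemma mk_pt_mem_comp {𝒜 : Finset (Submodule ℝ V)} (x : V) (hx : x ∈ arrComplement 𝒜) :
    (mkChamber x hx).pt ∈ connectedComponentIn (arrComplement 𝒜) x := by
  have h1 : connectedComponentIn (arrComplement 𝒜) x
      = connectedComponentIn (arrComplement 𝒜) (mkChamber x hx).pt :=
    Chamber.eq_comp (mkChamber x hx)
  rw [h1]
  exact mem_connectedComponentIn (Chamber.pt_mem _)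

lemma mk_sign {𝒜 : Finset (Submodule ℝ V)} (x : V) (hx : x ∈ arrComplement 𝒜)
    (H : Submodule ℝ V) (hH : H ∈ 𝒜) (g : V →ₗ[ℝ] ℝ) (hker : LinearMap.ker g = H) :
    (0 < g (mkChamber x hx).pt ↔ 0 < g x) := by
  refine sign_const g isPreconnected_connectedComponentIn ?_
    (mk_pt_mem_comp x hx) (mem_connectedComponentIn hx)
  intro z hz h0
  have hz' : z ∈ arrComplement 𝒜 := connectedComponentIn_subset _ _ hz
  exact hz' H hH (hker ▸ LinearMap.mem_ker.2 h0)

lemma dense_complement :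
    ∀ (ℬ : Finset (Submodule ℝ V)), IsCentralArrangement ℬ → Dense (arrComplement ℬ) := by
  classical
  intro ℬ
  induction ℬ using Finset.induction_on with
  | empty =>
      intro _
      have : arrComplement (∅ : Finset (Submodule ℝ V)) = univ := by
        ext z; simp [arrComplement]
      rw [this]; exact dense_univ
  | @insert H s hHs ih =>
      intro hC
      have hsplit : arrComplement (insert H s) = (↑H : Set V)ᶜ ∩ arrComplement s := by
        ext z
        simp only [arrComplement, mem_setOf_eq, Finset.mem_insert, mem_inter_iff,
          mem_compl_iff, SetLike.mem_coe]
        constructor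
        · intro h; exact ⟨h H (Or.inl rfl), fun H' hH' => h H' (Or.inr hH')⟩
        · rintro ⟨h1, h2⟩ H' (rfl | hH')
          · exact h1
          · exact h2 H' hH'
      obtain ⟨g, hg0, hker⟩ := hC H (Finset.mem_insert_self H s)
      have hne : H ≠ ⊤ := by
        intro hEq
        apply hg0
        rw [← LinearMap.ker_eq_top, hker, hEq]
      have hclosed : IsClosed (↑H : Set V) := H.closed_of_finiteDimensional
      have hdenseH : Dense ((↑H : Set V)ᶜ) := by
        rw [← interior_eq_empty_iff_dense_compl]
        by_contra hni
        exact hne (H.eq_top_of_nonempty_interior' (nonempty_iff_ne_empty.2 hni))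
      have hds : Dense (arrComplement s) :=
        ih (fun H' hH' => hC H' (Finset.mem_insert_of_mem hH'))
      rw [hsplit]
      exact hdenseH.inter_of_isOpen_left hds hclosed.isOpen_compl

lemma exists_mem_complement {𝒜 : Finset (Submodule ℝ V)}
    (h𝒜 : IsCentralArrangement 𝒜) : ∃ p, p ∈ arrComplement 𝒜 := by
  obtain ⟨p, hp⟩ := (dense_complement 𝒜 h𝒜).nonempty
  exact ⟨p, hp⟩

lemma chambers_finite (𝒜 : Finset (Submodule ℝ V)) (h𝒜 : IsCentralArrangement 𝒜) :
    Finite (Chamber 𝒜) := by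
  classical
  set gfun : {H // H ∈ 𝒜} → (V →ₗ[ℝ] ℝ) := fun H => (h𝒜 H.1 H.2).choose with hgfun
  have hspec : ∀ H : {H // H ∈ 𝒜}, LinearMap.ker (gfun H) = H.1 :=
    fun H => (h𝒜 H.1 H.2).choose_spec.2
  have hinj : Function.Injective
      (fun (c : Chamber 𝒜) (H : {H // H ∈ 𝒜}) => decide (0 < gfun H c.pt)) := by
    intro c c' hEq
    apply chamber_eq_of_signs h𝒜
    intro H hH
    refine ⟨gfun ⟨H, hH⟩, hspec ⟨H, hH⟩, ?_⟩
    have := congrFun hEq ⟨H, hH⟩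
    simpa [decide_eq_decide] using this
  exact Finite.of_injective _ hinj

end Aux2


/-- A map `f : Ch(𝒜) → Ch(𝒜)` satisfying IIA is bijective if and only if, for
every `H ∈ 𝒜`, any associated map `φ_H : Ch({H}) → Ch({H})` is either the
identity or the transposition exchanging the two elements of `Ch({H})`. -/
theorem bijective_iff_components_id_or_transposition
    {V : Type*} [NormedAddCommGroup V] [NormedSpace ℝ V] [FiniteDimensional ℝ V]
    (𝒜 : Finset (Submodule ℝ V)) (h𝒜 : IsCentralArrangement 𝒜)
    (f : Chamber 𝒜 → Chamber 𝒜) (hf : SatisfiesIIAone f) :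
    Function.Bijective f ↔
      ∀ (H : Submodule ℝ V) (hH : H ∈ 𝒜)
        (φ : Chamber ({H} : Finset (Submodule ℝ V)) →
             Chamber ({H} : Finset (Submodule ℝ V))),
        (∀ c : Chamber 𝒜, φ (epsC H hH c) = epsC H hH (f c)) →
        (φ = id ∨ (Function.Bijective φ ∧ ∀ d, φ d ≠ d)) := by
  constructor
  · intro hbij H hH φ hφ
    obtain ⟨g, hg0, hker⟩ := h𝒜 H hH
    obtain ⟨p, hp⟩ := exists_mem_complement h𝒜
    have hgp : g p ≠ 0 := fun h0 => hp H hH (hker ▸ LinearMap.mem_ker.2 h0)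
    have hneg : ∀ x, x ∈ arrComplement 𝒜 → -x ∈ arrComplement 𝒜 := by
      intro x hx H' hH' hm
      exact hx H' hH' ((Submodule.neg_mem_iff H').1 hm)
    obtain ⟨q, hq, hgq⟩ : ∃ q, q ∈ arrComplement 𝒜 ∧ 0 < g q := by
      rcases lt_or_gt_of_ne hgp with h | h
      · exact ⟨-p, hneg p hp, by simpa using h⟩
      · exact ⟨p, hp, h⟩
    have hqn : -q ∈ arrComplement 𝒜 := hneg q hq
    set cP := mkChamber q hq with hcP
    set cN := mkChamber (-q) hqn with hcN
    have hsP : 0 < g cP.pt := (mk_sign q hq H hH g hker).2 hgq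
    have hsN : g cN.pt < 0 := by
      have h1 : ¬ (0 < g cN.pt) := by
        intro h
        have := (mk_sign (-q) hqn H hH g hker).1 h
        simp only [map_neg] at this
        linarith
      exact lt_of_le_of_ne (not_lt.1 h1) (pt_not_ker H hH g hker cN)
    set A := epsC H hH cP with hA
    set B := epsC H hH cN with hB
    have hAB : A ≠ B := by
      intro hEq
      have := (epsC_eq_iff H hH g hker cP cN).1 hEq
      exact absurd (this.1 hsP) (not_lt.2 hsN.le)
    have hall : ∀ d : Chamber ({H} : Finset (Submodule ℝ V)), d = A ∨ d = B := by
      intro d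
      have hdne : g d.pt ≠ 0 := pt_not_ker H (Finset.mem_singleton_self H) g hker d
      have hdval : d.1 = connectedComponentIn {z | g z ≠ 0} d.pt := by
        rw [Chamber.eq_comp d, arrComplement_singleton H g hker]
      have hAval : A.1 = {z | 0 < g z} := by
        rw [hA, epsC_val H hH g hker cP, comp_eq_halfspace g hsP]
      have hBval : B.1 = {z | g z < 0} := by
        rw [hB, epsC_val H hH g hker cN, comp_eq_halfspace_neg g hsN]
      rcases lt_or_gt_of_ne hdne with h | h
      · right
        exact Subtype.ext (by rw [hdval, comp_eq_halfspace_neg g h, hBval])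
      · left
        exact Subtype.ext (by rw [hdval, comp_eq_halfspace g h, hAval])
    rcases hall (φ A) with h1 | h1 <;> rcases hall (φ B) with h2 | h2
    · -- φ A = A, φ B = A : contradicts surjectivity
      exfalso
      obtain ⟨c, hc⟩ := hbij.2 cN
      have hfc : φ (epsC H hH c) = B := by rw [hφ c, hc]
      rcases hall (epsC H hH c) with h | h <;> rw [h] at hfc
      · rw [h1] at hfc; exact hAB hfc
      · rw [h2] at hfc; exact hAB hfc
    · -- φ A = A, φ B = B : identity
      left
      funext d
      rcases hall d with rfl | rfl
      · simpa using h1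
      · simpa using h2
    · -- φ A = B, φ B = A : transposition
      right
      have hinv : Function.Involutive φ := by
        intro d
        rcases hall d with rfl | rfl
        · rw [h1, h2]
        · rw [h2, h1]
      refine ⟨hinv.bijective, ?_⟩
      intro d
      rcases hall d with rfl | rfl
      · rw [h1]; exact fun h => hAB h.symm
      · rw [h2]; exact hAB
    · -- φ A = B, φ B = B : contradicts surjectivity
      exfalso
      obtain ⟨c, hc⟩ := hbij.2 cP
      have hfc : φ (epsC H hH c) = A := by rw [hφ c, hc]
      rcases hall (epsC H hH c) with h | h <;> rw [h] at hfc
      · rw [h1] at hfc; exact hAB hfc.symm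
      · rw [h2] at hfc; exact hAB hfc.symm
  · intro hside
    have : Finite (Chamber 𝒜) := chambers_finite 𝒜 h𝒜
    rw [← Finite.injective_iff_bijective]
    intro c c' hcc
    apply chamber_eq_of_signs h𝒜
    intro H hH
    obtain ⟨g, hg0, hker⟩ := h𝒜 H hH
    refine ⟨g, hker, ?_⟩
    obtain ⟨φ, hφ⟩ := hf H hH
    have hinj : Function.Injective φ := by
      rcases hside H hH φ hφ with h | h
      · rw [h]; exact fun a b hab => hab
      · exact h.1.injective
    have hφeq : φ (epsC H hH c) = φ (epsC H hH c') := by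
      rw [hφ c, hφ c', hcc]
    exact (epsC_eq_iff H hH g hker c c').1 (hinj hφeq)
end
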